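/- arXiv:2504.04957 — 2 statements merged into one kernel-verified Lean document; each statement's English description precedes it below -/
import Mathlib

section
/- A degree a is recursively traceable if and only if for every unbounded, non-decreasing computable function p : ω → ω with p(0) > 0 and every function f computable in a, there exists a computable function g such that |D_{g(n)}| ≤ p(n) and f(n) ∈ D_{g(n)} for all n. -/
open scoped ENNReal

attribute [local instance] Classical.propDecidable

/-- Cantor space `2^ω`. -/
abbrev Cantor := ℕ → Bool

/-- The length-`n` initial segment `X↾n` of `X ∈ 2^ω`, as a finite binary string. -/
def seg (X : Cantor) (n : ℕ) : List Bool := (List.range n).map X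

/-- `σ ≺ X` : the finite string `σ` is an initial segment of `X`. -/
def PrefixOfSeq (σ : List Bool) (X : Cantor) : Prop := seg X σ.length = σ

/-- The basic clopen set `[σ]` of all infinite sequences extending `σ`. -/
def cyl (σ : List Bool) : Set Cantor := {X | PrefixOfSeq σ X}

/-- Partial recursive functions relative to a (total) oracle `O : ℕ → ℕ`:
the oracle version of `Nat.Partrec`. -/
inductive RecursiveInOracle (O : ℕ → ℕ) : (ℕ →. ℕ) → Prop
  | oracle : RecursiveInOracle O (fun n => Part.some (O n))
  | zero : RecursiveInOracle O (pure 0)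
  | succ : RecursiveInOracle O Nat.succ
  | left : RecursiveInOracle O ↑fun n : ℕ => n.unpair.1
  | right : RecursiveInOracle O ↑fun n : ℕ => n.unpair.2
  | pair {f g} : RecursiveInOracle O f → RecursiveInOracle O g →
      RecursiveInOracle O fun n => Nat.pair <$> f n <*> g n
  | comp {f g} : RecursiveInOracle O f → RecursiveInOracle O g →
      RecursiveInOracle O fun n => g n >>= f
  | prec {f g} : RecursiveInOracle O f → RecursiveInOracle O g →
      RecursiveInOracle O (Nat.unpaired fun a n =>
        n.rec (f a) fun y IH => do let i ← IH; g (Nat.pair a (Nat.pair y i)))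
  | rfind {f} : RecursiveInOracle O f →
      RecursiveInOracle O fun a => Nat.rfind fun n => (fun m => m = 0) <$> f (Nat.pair a n)

/-- A (total) function between coded types is recursive in the oracle `O`. -/
def RecIn {α β : Type} [Primcodable α] [Primcodable β] (O : ℕ → ℕ) (f : α → β) : Prop :=
  RecursiveInOracle O fun n =>
    (Part.ofOption (Encodable.decode (α := α) n)).bind fun a => Part.some (Encodable.encode (f a))

/-- A set `X ∈ 2^ω` viewed as a total oracle. -/
def oracleOf (X : Cantor) : ℕ → ℕ := fun n => cond (X n) 1 0

/-- A function between coded types viewed as a total oracle on `ℕ`. -/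
def oracleFn {α β : Type} [Primcodable α] [Primcodable β] (f : α → β) : ℕ → ℕ :=
  fun n => Encodable.encode ((Encodable.decode (α := α) n).map f)

/-- Turing reducibility `X ≤_T Y` between elements of `2^ω`. -/
def TRed (X Y : Cantor) : Prop := RecIn (oracleOf Y) X

/-- Turing equivalence `X ≡_T Y`. -/
def TEquiv (X Y : Cantor) : Prop := TRed X Y ∧ TRed Y X

/-- The Turing degree of `Z`, as a set of reals. -/
def degCl (Z : Cantor) : Set Cantor := {Y | TEquiv Y Z}

/-- Many-one reducibility `X ≤_m Y` between subsets of `ω` (as elements of `2^ω`). -/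
def ManyOneRed (X Y : Cantor) : Prop := ∃ g : ℕ → ℕ, Computable g ∧ ∀ n, X n = Y (g n)

/-- The recursive join `A ⊕ B`. -/
def join (A B : Cantor) : Cantor := fun n => if n % 2 = 0 then A (n / 2) else B (n / 2)

/-- `X` is of minimal Turing degree. -/
def MinimalDeg (X : Cantor) : Prop :=
  ¬Computable X ∧ ∀ Y : Cantor, TRed Y X → Computable Y ∨ TRed X Y

/-- `B` is a minimal cover of the countable class `S`: `B` strictly bounds every member of `S`,
and everything below `B` is either below some member of `S` or joins with one above `B`. -/
def MinimalCoverOf (B : Cantor) (S : Set Cantor) : Prop :=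
  (∀ A ∈ S, TRed A B ∧ ¬TRed B A) ∧
  ∀ C : Cantor, TRed C B → ∃ A ∈ S, TRed C A ∨ TRed B (join A C)

/-- `R` is of hyperimmune-free degree: every function it computes is dominated by a
computable function. -/
def HypImmFree (R : Cantor) : Prop :=
  ∀ f : ℕ → ℕ, RecIn (oracleOf R) f → ∃ g : ℕ → ℕ, Computable g ∧ ∀ n, f n ≤ g n

/-- `d` is a supermartingale. -/
def IsSupermartingale (d : List Bool → ℝ) : Prop :=
  (∀ σ, 0 ≤ d σ) ∧ ∀ σ, d (σ ++ [false]) + d (σ ++ [true]) ≤ 2 * d σ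

/-- `d` is a martingale. -/
def IsMartingale (d : List Bool → ℝ) : Prop :=
  (∀ σ, 0 ≤ d σ) ∧ ∀ σ, d (σ ++ [false]) + d (σ ++ [true]) = 2 * d σ

/-- `d` is lower semicomputable (r.e.) relative to oracle `O`: it is the monotone limit of a
uniformly `O`-recursive sequence of rationals. -/
def LowerSemicomputableIn (O : ℕ → ℕ) (d : List Bool → ℝ) : Prop :=
  ∃ q : List Bool × ℕ → ℚ, RecIn O q ∧ (∀ σ, Monotone fun n => q (σ, n)) ∧
    ∀ σ, Filter.Tendsto (fun n => (q (σ, n) : ℝ)) Filter.atTop (nhds (d σ))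

/-- `d` is lower semicomputable (an r.e. supermartingale value function). -/
def LowerSemicomputable (d : List Bool → ℝ) : Prop :=
  ∃ q : List Bool × ℕ → ℚ, Computable q ∧ (∀ σ, Monotone fun n => q (σ, n)) ∧
    ∀ σ, Filter.Tendsto (fun n => (q (σ, n) : ℝ)) Filter.atTop (nhds (d σ))

/-- `d` `s`-succeeds on `X`: `limsup_n d(X↾n)/2^{(1-s)n} = ∞`
(equivalently, the sequence is unbounded). -/
def Succeeds (d : List Bool → ℝ) (s : ℚ) (X : Cantor) : Prop :=
  ∀ C : ℝ, ∃ n : ℕ, C * (2 : ℝ) ^ ((1 - (s : ℝ)) * n) ≤ d (seg X n)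

/-- `d` strongly `s`-succeeds on `X`: `liminf_n d(X↾n)/2^{(1-s)n} = ∞`. -/
def SucceedsStrongly (d : List Bool → ℝ) (s : ℚ) (X : Cantor) : Prop :=
  ∀ C : ℝ, ∃ N : ℕ, ∀ n ≥ N, C * (2 : ℝ) ^ ((1 - (s : ℝ)) * n) ≤ d (seg X n)

/-- Generic dimension notion: the infimum of all `s ∈ ℚ ∩ [0,1]` such that some supermartingale
satisfying `P` succeeds (in the sense of `Succ`) on every member of `A` (with value `1` if there
is no such `s`). -/
noncomputable def dimVia (P : (List Bool → ℝ) → Prop)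
    (Succ : (List Bool → ℝ) → ℚ → Cantor → Prop) (A : Set Cantor) : ℝ≥0∞ :=
  sInf ({1} ∪ {x : ℝ≥0∞ | ∃ s : ℚ, 0 ≤ s ∧ s ≤ 1 ∧ x = ENNReal.ofReal (s : ℝ) ∧
    ∃ d, IsSupermartingale d ∧ P d ∧ ∀ X ∈ A, Succ d s X})

/-- Effective Hausdorff dimension of a class (Lutz). -/
noncomputable def effDim (A : Set Cantor) : ℝ≥0∞ := dimVia LowerSemicomputable Succeeds A

/-- Effective Hausdorff dimension relative to oracle `O`. -/
noncomputable def effDimIn (O : ℕ → ℕ) (A : Set Cantor) : ℝ≥0∞ :=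
  dimVia (LowerSemicomputableIn O) Succeeds A

/-- Effective packing dimension of a class. -/
noncomputable def effPDim (A : Set Cantor) : ℝ≥0∞ := dimVia LowerSemicomputable SucceedsStrongly A

/-- Effective packing dimension relative to oracle `O`. -/
noncomputable def effPDimIn (O : ℕ → ℕ) (A : Set Cantor) : ℝ≥0∞ :=
  dimVia (LowerSemicomputableIn O) SucceedsStrongly A

/-- (Classical) Hausdorff dimension of a subset of `2^ω`, via the point-to-set principle:
the infimum over all oracles `Z` of the effective-in-`Z` Hausdorff dimension. -/
noncomputable def hausdorffDim (A : Set Cantor) : ℝ≥0∞ := ⨅ Z : Cantor, effDimIn (oracleOf Z) A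

/-- (Classical) packing dimension of a subset of `2^ω`, via the point-to-set principle. -/
noncomputable def packingDim (A : Set Cantor) : ℝ≥0∞ := ⨅ Z : Cantor, effPDimIn (oracleOf Z) A

/-- The canonical enumeration `n ↦ D_n` of finite subsets of `ω`: `D_n` is the set of
positions of 1-bits in the binary expansion of `n`. -/
def Dfin (n : ℕ) : Finset ℕ := (Finset.range n).filter fun i => n.testBit i = true

/-- `A` is recursively traceable. -/
def RecTraceable (A : Cantor) : Prop :=
  ∃ b : ℕ → ℕ, Computable b ∧ ∀ f : ℕ → ℕ, RecIn (oracleOf A) f →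
    ∃ g : ℕ → ℕ, Computable g ∧ ∀ n, (Dfin (g n)).card ≤ b n ∧ f n ∈ Dfin (g n)

/-- A function tree: `T(σi)` properly extends `T(σ)`, and `T(σ0)`, `T(σ1)` are incomparable. -/
structure FunTree where
  f : List Bool → List Bool
  extend : ∀ σ (i : Bool), f σ <+: f (σ ++ [i]) ∧ (f σ).length < (f (σ ++ [i])).length
  split : ∀ σ, ¬ f (σ ++ [false]) <+: f (σ ++ [true]) ∧ ¬ f (σ ++ [true]) <+: f (σ ++ [false])

/-- `[T]`, the set of infinite paths through the function tree `T`. -/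
def Paths (T : FunTree) : Set Cantor :=
  {X | ∃ Y : Cantor, ∀ n, PrefixOfSeq (T.f (seg Y n)) X}

/-- `T ≤_T Y` for a function tree `T` and a real `Y`. -/
def TreeRedToReal (T : FunTree) (Y : Cantor) : Prop := RecIn (oracleOf Y) T.f

/-- `Y ≤_T T` for a real `Y` and a function tree `T` (the tree used as an oracle). -/
def RealRedToTree (Y : Cantor) (T : FunTree) : Prop := RecIn (oracleFn T.f) Y

/-- `S ≤_T T` between function trees. -/
def TreeRedToTree (S T : FunTree) : Prop := RecIn (oracleFn T.f) S.f

/-- `T` is recursively pointed: every path of `T` computes `T`. -/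
def RecPointed (T : FunTree) : Prop := ∀ X ∈ Paths T, TreeRedToReal T X

/-- The binary value of a string (read most-significant-bit first); strings of equal
length are lexicographically ordered exactly as their values. -/
def natOfStr (σ : List Bool) : ℕ := σ.foldl (fun a b => 2 * a + cond b 1 0) 0

/-- The length-`len` binary string with value `k`. -/
def strOfNat (len k : ℕ) : List Bool := (List.range len).map fun i => k.testBit (len - 1 - i)

/-- `l(σ) = Σ_{|τ|=|σ|, τ <_L σ} ν([τ])`, computed via the value correspondence between the
lexicographic order on strings of equal length and the numeric order of their values. -/
noncomputable def lfun (ν : MeasureTheory.Measure Cantor) (σ : List Bool) : ℝ :=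
  ∑ k ∈ Finset.range (natOfStr σ), (ν (cyl (strOfNat σ.length k))).toReal

/-- `r(σ) = l(σ) + ν([σ])`. -/
noncomputable def rfun (ν : MeasureTheory.Measure Cantor) (σ : List Bool) : ℝ :=
  lfun ν σ + (ν (cyl σ)).toReal

/-- `0.A`: the real number in `[0,1]` with binary expansion `A`. -/
noncomputable def realOf (A : Cantor) : ℝ := ∑' n : ℕ, cond (A n) ((2 : ℝ)⁻¹ ^ (n + 1)) 0

/-- The weight `2^{-|σ|}` of an (optional) string, for measuring Martin-Löf tests. -/
noncomputable def testWeight : Option (List Bool) → ℝ≥0∞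
  | none => 0
  | some σ => (2 : ℝ≥0∞)⁻¹ ^ σ.length

/-- `V` is a Martin-Löf test: a uniformly computable enumeration whose `n`-th level has
total weight at most `2^{-n}`. -/
def MLTest (V : ℕ × ℕ → Option (List Bool)) : Prop :=
  Computable V ∧ ∀ n, (∑' k : ℕ, testWeight (V (n, k))) ≤ (2 : ℝ≥0∞)⁻¹ ^ n

/-- `X` is covered by the test `V` (belongs to every level). -/
def MLCovered (V : ℕ × ℕ → Option (List Bool)) (X : Cantor) : Prop :=
  ∀ n, ∃ k σ, V (n, k) = some σ ∧ PrefixOfSeq σ X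

/-- `X` is 1-random (Martin-Löf random). -/
def MLRandom (X : Cantor) : Prop := ∀ V, MLTest V → ¬MLCovered V X

/-- An antichain of Turing degrees (containing no computable set, closed under Turing
equivalence, with Turing-inequivalent members pairwise incomparable). -/
def IsAntichainDeg (B : Set Cantor) : Prop :=
  (∀ X ∈ B, ¬Computable X) ∧ (∀ X ∈ B, ∀ Y, TEquiv Y X → Y ∈ B) ∧
  ∀ X ∈ B, ∀ Y ∈ B, ¬TEquiv X Y → ¬TRed X Y ∧ ¬TRed Y X

/-- A maximal antichain of Turing degrees. -/
def MaximalAntichainDeg (B : Set Cantor) : Prop :=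
  IsAntichainDeg B ∧ ∀ Z ∉ B, ¬IsAntichainDeg (B ∪ degCl Z)

/-- A chain of Turing degrees. -/
def IsChainDeg (A : Set Cantor) : Prop :=
  (∀ X ∈ A, ∀ Y, TEquiv Y X → Y ∈ A) ∧
  ∀ X ∈ A, ∀ Y ∈ A, ¬TEquiv X Y → TRed X Y ∨ TRed Y X

/-- A maximal chain of Turing degrees. -/
def MaximalChainDeg (A : Set Cantor) : Prop :=
  IsChainDeg A ∧ ∀ Z ∉ A, ¬IsChainDeg (A ∪ degCl Z)

/-- The first uncountable ordinal `ω₁`. -/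
noncomputable def omega1 : Ordinal := (Cardinal.aleph 1).ord

-- ===================== auxiliary development ==========================
namespace TZ

theorem congr' {O : ℕ → ℕ} {f g : ℕ →. ℕ} (h : RecursiveInOracle O f)
    (e : ∀ n, f n = g n) : RecursiveInOracle O g := (funext e : f = g) ▸ h

theorem recursiveIn_of_partrec {O : ℕ → ℕ} {f : ℕ →. ℕ} (h : Nat.Partrec f) :
    RecursiveInOracle O f := by
  induction h with
  | zero => exact .zero
  | succ => exact .succ
  | left => exact .left
  | right => exact .right
  | pair _ _ ih1 ih2 => exact .pair ih1 ih2
  | comp _ _ ih1 ih2 => exact .comp ih1 ih2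
  | prec _ _ ih1 ih2 => exact .prec ih1 ih2
  | rfind _ ih => exact .rfind ih

theorem recursiveIn_of_computable {O : ℕ → ℕ} {f : ℕ → ℕ} (h : Computable f) :
    RecursiveInOracle O fun n => Part.some (f n) :=
  recursiveIn_of_partrec (Partrec.nat_iff.mp h)

theorem recIn_nat {O : ℕ → ℕ} {f : ℕ → ℕ} :
    RecIn O f ↔ RecursiveInOracle O fun n => Part.some (f n) := by
  have e : ∀ n, ((Part.ofOption (Encodable.decode (α := ℕ) n)).bind fun a =>
      Part.some (Encodable.encode (f a))) = Part.some (f n) := by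
    intro n
    rw [show (Encodable.decode (α := ℕ) n) = some n from rfl]
    simp [Part.ofOption]
  constructor
  · intro h; exact congr' h e
  · intro h; exact congr' h fun n => (e n).symm

theorem totalComp {O : ℕ → ℕ} {f h : ℕ → ℕ}
    (hf : RecursiveInOracle O fun n => Part.some (f n)) (hh : Computable h) :
    RecursiveInOracle O fun n => Part.some (f (h n)) :=
  congr' (RecursiveInOracle.comp hf (recursiveIn_of_computable hh)) fun n => by
    simp [Part.bind_some]

/-- History function: `histf f k` codes the list `[f (k-1), …, f 0]` via iterated pairing. -/
def histf (f : ℕ → ℕ) (k : ℕ) : ℕ := Nat.rec 0 (fun y IH => Nat.pair (f y) IH + 1) k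

@[simp] theorem histf_zero (f : ℕ → ℕ) : histf f 0 = 0 := rfl
@[simp] theorem histf_succ (f : ℕ → ℕ) (k : ℕ) :
    histf f (k + 1) = Nat.pair (f k) (histf f k) + 1 := rfl

theorem histf_recursiveIn {O : ℕ → ℕ} {f : ℕ → ℕ}
    (hf : RecursiveInOracle O fun n => Part.some (f n)) :
    RecursiveInOracle O fun n => Part.some (histf f n) := by
  have hproj : Computable fun n : ℕ => n.unpair.2.unpair.1 :=
    Primrec.to_comp (Primrec.fst.comp (Primrec.unpair.comp (Primrec.snd.comp Primrec.unpair)))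
  have h1 : RecursiveInOracle O fun n => Part.some (f n.unpair.2.unpair.1) := totalComp hf hproj
  have h2 : RecursiveInOracle O fun n => Part.some n.unpair.2.unpair.2 :=
    recursiveIn_of_computable (Primrec.to_comp
      (Primrec.snd.comp (Primrec.unpair.comp (Primrec.snd.comp Primrec.unpair))))
  have h3 : RecursiveInOracle O fun n =>
      Part.some (Nat.pair (f n.unpair.2.unpair.1) n.unpair.2.unpair.2) :=
    congr' (RecursiveInOracle.pair h1 h2) fun n => by simp [Seq.seq]
  have h4 : RecursiveInOracle O fun n =>
      Part.some (Nat.pair (f n.unpair.2.unpair.1) n.unpair.2.unpair.2 + 1) :=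
    congr' (RecursiveInOracle.comp RecursiveInOracle.succ h3) fun n => by exact Part.bind_some _ _
  have h5 := RecursiveInOracle.prec (RecursiveInOracle.zero (O := O)) h4
  have key : ∀ a n : ℕ, (Nat.rec ((pure 0 : ℕ →. ℕ) a) (fun y IH => do
      let i ← IH
      (fun k : ℕ => Part.some (Nat.pair (f k.unpair.2.unpair.1) k.unpair.2.unpair.2 + 1))
        (Nat.pair a (Nat.pair y i))) n : Part ℕ) = Part.some (histf f n) := by
    intro a n
    induction n with
    | zero => rfl
    | succ n ih =>
      show (Nat.rec (motive := fun _ => Part ℕ) ((pure 0 : ℕ →. ℕ) a) _ n) >>= _ = _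
      rw [ih]
      simp [Part.bind_some, Nat.unpair_pair]
  have h6 := RecursiveInOracle.comp h5 (recursiveIn_of_computable
    (Primrec.to_comp (Primrec₂.natPair.comp (Primrec.const 0) Primrec.id)))
  exact congr' h6 fun n => by
    refine Eq.trans (Part.bind_some (Nat.pair 0 n) _) ?_
    rw [show (Nat.unpaired (fun a n =>
        n.rec ((pure 0 : ℕ →. ℕ) a) fun y IH => do
          let i ← IH
          (fun k : ℕ => Part.some (Nat.pair (f k.unpair.2.unpair.1) k.unpair.2.unpair.2 + 1))
            (Nat.pair a (Nat.pair y i)))) (Nat.pair 0 n) = (Nat.rec ((pure 0 : ℕ →. ℕ) 0)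
        (fun y IH => do
          let i ← IH
          (fun k : ℕ => Part.some (Nat.pair (f k.unpair.2.unpair.1) k.unpair.2.unpair.2 + 1))
            (Nat.pair 0 (Nat.pair y i))) n : Part ℕ) from by
      unfold Nat.unpaired
      rw [Nat.unpair_pair]]
    exact key 0 n

/-! ### Least-witness search -/

theorem computable_least {q : ℕ → ℕ → Bool} (hq : Computable₂ q) (H : ∀ a, ∃ k, q a k = true) :
    ∃ s : ℕ → ℕ, Computable s ∧ ∀ a, q a (s a) = true ∧ ∀ j, j < s a → q a j = false := by
  have hP : Partrec₂ fun (a n : ℕ) => (Part.some (q a n) : Part Bool) := by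
    exact hq.partrec₂
  have hF : Partrec fun a => Nat.rfind fun n => (Part.some (q a n) : Part Bool) :=
    Partrec.rfind hP
  have dom : ∀ a, (Nat.rfind fun n => (Part.some (q a n) : Part Bool)).Dom := by
    intro a
    obtain ⟨k, hk⟩ := H a
    exact Nat.rfind_dom.mpr ⟨k, Part.mem_some_iff.mpr hk.symm, fun {m} _ => trivial⟩
  refine ⟨fun a => (Nat.rfind fun n => (Part.some (q a n) : Part Bool)).get (dom a),
    Partrec.of_eq_tot hF (fun a => Part.get_mem (dom a)), fun a => ⟨?_, ?_⟩⟩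
  · exact (Part.mem_some_iff.mp (Nat.rfind_spec (Part.get_mem (dom a)))).symm
  · intro j hj
    exact (Part.mem_some_iff.mp (Nat.rfind_min (Part.get_mem (dom a)) hj)).symm

/-! ### Chain decoding -/

def chIter (j c : ℕ) : ℕ := Nat.rec c (fun _ IH => (IH - 1).unpair.2) j

def chNth (j c : ℕ) : ℕ := (chIter j c - 1).unpair.1

@[simp] theorem chIter_zero (c : ℕ) : chIter 0 c = c := rfl
@[simp] theorem chIter_succ (j c : ℕ) : chIter (j + 1) c = (chIter j c - 1).unpair.2 := rfl

theorem chIter_histf (f : ℕ → ℕ) : ∀ j k, j ≤ k → chIter j (histf f k) = histf f (k - j) := by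
  intro j
  induction j with
  | zero => intro k _; simp
  | succ j ih =>
    intro k h
    rw [chIter_succ, ih k (by omega)]
    rw [show k - j = (k - (j + 1)) + 1 by omega, histf_succ]
    simp

theorem chNth_histf (f : ℕ → ℕ) {j k : ℕ} (h : j < k) :
    chNth j (histf f k) = f (k - 1 - j) := by
  unfold chNth
  rw [chIter_histf f j k h.le, show k - j = (k - 1 - j) + 1 by omega, histf_succ]
  simp

theorem primrec_chIter : Primrec₂ chIter := by
  have h : Primrec₂ fun (c j : ℕ) => Nat.rec (motive := fun _ => ℕ) c (fun _ IH => (IH - 1).unpair.2) j :=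
    Primrec.nat_rec (f := fun c : ℕ => c) Primrec.id
      ((Primrec.snd.comp (Primrec.unpair.comp (Primrec.nat_sub.comp
        (Primrec.snd.comp Primrec.snd) (Primrec.const 1)))) : Primrec
          fun p : ℕ × (ℕ × ℕ) => (p.2.2 - 1).unpair.2).to₂
  exact (h.comp Primrec.snd Primrec.fst : Primrec fun p : ℕ × ℕ => chIter p.1 p.2)

theorem primrec_chNth : Primrec₂ chNth :=
  ((Primrec.fst.comp (Primrec.unpair.comp (Primrec.nat_sub.comp
    (primrec_chIter.comp Primrec.fst Primrec.snd) (Primrec.const 1)))) : Primrec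
      fun p : ℕ × ℕ => (chIter p.1 p.2 - 1).unpair.1)

/-! ### Bit-set encoding of finite sets -/

theorem primrec_pow : Primrec₂ fun a b : ℕ => a ^ b := Primrec₂.unpaired'.mp Nat.Primrec.pow

theorem testBit_iff_mod {x i : ℕ} : x.testBit i = true ↔ x / 2 ^ i % 2 = 1 := by
  rw [Nat.testBit_eq_decide_div_mod_eq]
  exact decide_eq_true_iff

theorem testBit_false_iff_mod {x i : ℕ} : x.testBit i = false ↔ x / 2 ^ i % 2 = 0 := by
  rcases Nat.mod_two_eq_zero_or_one (x / 2 ^ i) with h | h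
  · simp [h, ← Bool.not_eq_true, testBit_iff_mod]
  · simp [h, ← Bool.not_eq_true, testBit_iff_mod]

/-- Set bit `v` in `a` (idempotently), via pure arithmetic. -/
def setBit (v a : ℕ) : ℕ := a + (1 - a / 2 ^ v % 2) * 2 ^ v

theorem setBit_of_true {v a : ℕ} (h : a.testBit v = true) : setBit v a = a := by
  rw [setBit, testBit_iff_mod.mp h]; simp

theorem setBit_of_false {v a : ℕ} (h : a.testBit v = false) : setBit v a = a + 2 ^ v := by
  rw [setBit, testBit_false_iff_mod.mp h]; simp

theorem lt_pow_of_testBit_false {a v : ℕ} (hlt : a < 2 ^ (v + 1)) (h : a.testBit v = false) :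
    a < 2 ^ v := by
  by_contra hge
  push_neg at hge
  have hp1 : 2 ^ (v + 1) = 2 * 2 ^ v := by rw [pow_succ]; ring
  have h1 : a / 2 ^ v = 1 :=
    Nat.div_eq_of_lt_le (by simpa using hge) (by omega)
  rw [testBit_false_iff_mod, h1] at h
  omega

theorem testBit_two_pow_add_of_gt {a v i : ℕ} (h : a.testBit v = false) (hi : v < i) :
    (2 ^ v + a).testBit i = a.testBit i := by
  have hmodlt : a % 2 ^ (v + 1) < 2 ^ v := by
    apply lt_pow_of_testBit_false (Nat.mod_lt _ (Nat.pow_pos (by norm_num)))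
    simp [Nat.testBit_mod_two_pow, h]
  have hp1 : 2 ^ (v + 1) = 2 * 2 ^ v := by rw [pow_succ]; ring
  have hdiv : (2 ^ v + a) / 2 ^ (v + 1) = a / 2 ^ (v + 1) := by
    conv_lhs => rw [show 2 ^ v + a = 2 ^ (v + 1) * (a / 2 ^ (v + 1)) + (2 ^ v + a % 2 ^ (v + 1))
      by have := Nat.div_add_mod a (2 ^ (v + 1)); omega]
    rw [Nat.mul_add_div (Nat.pow_pos (by norm_num)),
      Nat.div_eq_of_lt (show 2 ^ v + a % 2 ^ (v + 1) < 2 ^ (v + 1) by omega), add_zero]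
  obtain ⟨t, rfl⟩ : ∃ t, i = (v + 1) + t := ⟨i - (v + 1), by omega⟩
  rw [Nat.testBit_eq_decide_div_mod_eq, Nat.testBit_eq_decide_div_mod_eq, pow_add,
    ← Nat.div_div_eq_div_mul, ← Nat.div_div_eq_div_mul, hdiv]

theorem setBit_testBit (v a i : ℕ) :
    (setBit v a).testBit i = true ↔ i = v ∨ a.testBit i = true := by
  cases h : a.testBit v with
  | true =>
    rw [setBit_of_true h]
    constructor
    · exact Or.inr
    · rintro (rfl | hb)
      · exact h
      · exact hb
  | false =>
    rw [setBit_of_false h, add_comm]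
    rcases lt_trichotomy i v with hiv | rfl | hiv
    · rw [Nat.testBit_two_pow_add_gt hiv]
      constructor
      · exact Or.inr
      · rintro (rfl | hb)
        · omega
        · exact hb
    · rw [Nat.testBit_two_pow_add_eq, h]
      simp
    · rw [testBit_two_pow_add_of_gt h hiv]
      constructor
      · exact Or.inr
      · rintro (rfl | hb)
        · omega
        · exact hb

theorem mem_Dfin {x i : ℕ} : i ∈ Dfin x ↔ x.testBit i = true := by
  unfold Dfin
  rw [Finset.mem_filter, Finset.mem_range]
  constructor
  · exact fun h => h.2
  · intro h
    refine ⟨?_, h⟩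
    have h1 := Nat.ge_two_pow_of_testBit h
    have h2 := Nat.lt_two_pow_self (n := i)
    omega

theorem Dfin_two_pow (a : ℕ) : Dfin (2 ^ a) = {a} := by
  ext i
  rw [mem_Dfin, Finset.mem_singleton, Nat.testBit_two_pow]
  simp [eq_comm]

/-! ### Extraction of traced candidate sets -/

/-- One step of the union-fold: add bit `h i` to `acc` if bit `i` of `x` is set. -/
def orStep (h : ℕ → ℕ) (x i acc : ℕ) : ℕ := acc + x / 2 ^ i % 2 * (setBit (h i) acc - acc)

theorem orStep_of_false {h : ℕ → ℕ} {x i : ℕ} (acc : ℕ) (hx : x.testBit i = false) :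
    orStep h x i acc = acc := by
  rw [orStep, testBit_false_iff_mod.mp hx]; simp

theorem orStep_of_true {h : ℕ → ℕ} {x i : ℕ} (acc : ℕ) (hx : x.testBit i = true) :
    orStep h x i acc = setBit (h i) acc := by
  have hge : acc ≤ setBit (h i) acc := Nat.le_add_right _ _
  rw [orStep, testBit_iff_mod.mp hx]
  omega

theorem foldr_orStep_testBit (h : ℕ → ℕ) (x : ℕ) (l : List ℕ) (t : ℕ) :
    ((l.foldr (fun i acc => orStep h x i acc) 0).testBit t = true ↔
      ∃ i ∈ l, x.testBit i = true ∧ h i = t) := by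
  induction l with
  | nil => simp [Nat.zero_testBit]
  | cons a l ih =>
    rw [List.foldr_cons]
    cases hx : x.testBit a with
    | false =>
      rw [orStep_of_false _ hx, ih]
      constructor
      · rintro ⟨i, hi, hb, he⟩; exact ⟨i, List.mem_cons_of_mem _ hi, hb, he⟩
      · rintro ⟨i, hi, hb, he⟩
        rcases List.mem_cons.mp hi with rfl | hi
        · rw [hx] at hb; cases hb
        · exact ⟨i, hi, hb, he⟩
    | true =>
      rw [orStep_of_true _ hx, setBit_testBit, ih]
      constructor
      · rintro (rfl | ⟨i, hi, hb, he⟩)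
        · exact ⟨a, List.mem_cons_self, hx, rfl⟩
        · exact ⟨i, List.mem_cons_of_mem _ hi, hb, he⟩
      · rintro ⟨i, hi, hb, he⟩
        rcases List.mem_cons.mp hi with rfl | hi
        · exact Or.inl he.symm
        · exact Or.inr ⟨i, hi, hb, he⟩

/-- The candidate-set code: the set of `chNth (K-1-n)`-projections of the members of `D_x`. -/
def extractCode (n x K : ℕ) : ℕ :=
  (List.range x).foldr (fun i acc => orStep (fun c => chNth (K - 1 - n) c) x i acc) 0

theorem Dfin_extractCode (n x K : ℕ) :
    Dfin (extractCode n x K) = (Dfin x).image (chNth (K - 1 - n)) := by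
  ext t
  rw [mem_Dfin, extractCode, foldr_orStep_testBit, Finset.mem_image]
  constructor
  · rintro ⟨i, _, hb, he⟩
    exact ⟨i, mem_Dfin.mpr hb, he⟩
  · rintro ⟨i, hi, he⟩
    have hb := mem_Dfin.mp hi
    refine ⟨i, List.mem_range.mpr ?_, hb, he⟩
    have h1 := Nat.ge_two_pow_of_testBit hb
    have h2 := Nat.lt_two_pow_self (n := i)
    omega

theorem primrec_extractCode : Primrec fun p : ℕ × ℕ × ℕ => extractCode p.1 p.2.1 p.2.2 := by
  have hrange : Primrec fun p : ℕ × ℕ × ℕ => List.range p.2.1 :=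
    Primrec.list_range.comp (Primrec.fst.comp Primrec.snd)
  have hzero : Primrec fun _ : ℕ × ℕ × ℕ => (0 : ℕ) := Primrec.const 0
  have hstep : Primrec₂ fun (p : ℕ × ℕ × ℕ) (bs : ℕ × ℕ) =>
      orStep (fun c => chNth (p.2.2 - 1 - p.1) c) p.2.1 bs.1 bs.2 := by
    unfold orStep setBit
    -- components over q : (ℕ × ℕ × ℕ) × (ℕ × ℕ)
    have N : Primrec fun q : (ℕ × ℕ × ℕ) × ℕ × ℕ => q.1.1 := Primrec.fst.comp Primrec.fst
    have X : Primrec fun q : (ℕ × ℕ × ℕ) × ℕ × ℕ => q.1.2.1 :=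
      Primrec.fst.comp (Primrec.snd.comp Primrec.fst)
    have K : Primrec fun q : (ℕ × ℕ × ℕ) × ℕ × ℕ => q.1.2.2 :=
      Primrec.snd.comp (Primrec.snd.comp Primrec.fst)
    have I : Primrec fun q : (ℕ × ℕ × ℕ) × ℕ × ℕ => q.2.1 := Primrec.fst.comp Primrec.snd
    have ACC : Primrec fun q : (ℕ × ℕ × ℕ) × ℕ × ℕ => q.2.2 := Primrec.snd.comp Primrec.snd
    have hch : Primrec fun q : (ℕ × ℕ × ℕ) × ℕ × ℕ => chNth (q.1.2.2 - 1 - q.1.1) q.2.1 :=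
      primrec_chNth.comp (Primrec.nat_sub.comp (Primrec.nat_sub.comp K (Primrec.const 1)) N) I
    have hp2 : Primrec fun q : (ℕ × ℕ × ℕ) × ℕ × ℕ =>
        (2 : ℕ) ^ chNth (q.1.2.2 - 1 - q.1.1) q.2.1 := primrec_pow.comp (Primrec.const 2) hch
    have hbit : Primrec fun q : (ℕ × ℕ × ℕ) × ℕ × ℕ => q.1.2.1 / 2 ^ q.2.1 % 2 :=
      Primrec.nat_mod.comp (Primrec.nat_div.comp X (primrec_pow.comp (Primrec.const 2) I))
        (Primrec.const 2)
    have hsb : Primrec fun q : (ℕ × ℕ × ℕ) × ℕ × ℕ =>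
        q.2.2 + (1 - q.2.2 / 2 ^ chNth (q.1.2.2 - 1 - q.1.1) q.2.1 % 2) *
          2 ^ chNth (q.1.2.2 - 1 - q.1.1) q.2.1 :=
      Primrec.nat_add.comp ACC (Primrec.nat_mul.comp
        (Primrec.nat_sub.comp (Primrec.const 1)
          (Primrec.nat_mod.comp (Primrec.nat_div.comp ACC hp2) (Primrec.const 2))) hp2)
    exact (Primrec.nat_add.comp ACC (Primrec.nat_mul.comp hbit
      (Primrec.nat_sub.comp hsb ACC)) : Primrec _)
  have := Primrec.list_foldr hrange hzero hstep
  exact this.of_eq fun p => rfl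

attribute [irreducible] extractCode chNth chIter setBit orStep histf

end TZ

open TZ in
set_option maxHeartbeats 1000000 in
/-- Terwijn–Zambella: `A` is recursively traceable iff for every unbounded,
non-decreasing computable `p` with `p 0 > 0`, every `f ≤_T A` has a computable trace with
bound `p`. -/
theorem stmt5 (A : Cantor) :
    RecTraceable A ↔
      ∀ p : ℕ → ℕ, Computable p → Monotone p → (∀ m, ∃ n, m ≤ p n) → 0 < p 0 →
        ∀ f : ℕ → ℕ, RecIn (oracleOf A) f →
          ∃ g : ℕ → ℕ, Computable g ∧ ∀ n, (Dfin (g n)).card ≤ p n ∧ f n ∈ Dfin (g n) := by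
  constructor
  · rintro ⟨b, hb, hT⟩ p hp hpm hpu hp0 f hf
    -- a computable witness function `s` with `b m ≤ p (s m)`
    have hq1 : Computable₂ fun a k : ℕ => b a - p k == 0 := by
      exact (Primrec.beq.to_comp.comp
        (Primrec.nat_sub.to_comp.comp (hb.comp Computable.fst) (hp.comp Computable.snd))
        (Computable.const 0) : Computable fun pr : ℕ × ℕ => b pr.1 - p pr.2 == 0)
    have H1 : ∀ a, ∃ k, (b a - p k == 0) = true := by
      intro a
      obtain ⟨k, hk⟩ := hpu (b a)
      exact ⟨k, by simp [Nat.sub_eq_zero_of_le hk]⟩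
    obtain ⟨s, hs, hsspec⟩ := computable_least hq1 H1
    have hsp : ∀ m, b m ≤ p (s m) := by
      intro m
      have h := (hsspec m).1
      simp only [beq_iff_eq] at h
      omega
    -- the strictly increasing block-boundary function `S`
    set S : ℕ → ℕ :=
      fun m => Nat.rec (motive := fun _ => ℕ) (s 0) (fun y IH => max IH (s (y + 1)) + 1) m
      with hSdef
    have hS : Computable S := by
      have hh : Computable₂ fun (_ : ℕ) (pr : ℕ × ℕ) => max pr.2 (s (pr.1 + 1)) + 1 := by
        exact (Primrec.succ.to_comp.comp (Primrec.nat_max.to_comp.comp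
          (Computable.snd.comp Computable.snd)
          (hs.comp (Primrec.succ.to_comp.comp (Computable.fst.comp Computable.snd)))) :
            Computable fun q : ℕ × ℕ × ℕ => max q.2.2 (s (q.2.1 + 1)) + 1)
      exact (Computable.nat_rec Computable.id (Computable.const (s 0)) hh).of_eq fun n => rfl
    have hSsucc : ∀ m, S (m + 1) = max (S m) (s (m + 1)) + 1 := fun m => rfl
    have hsS : ∀ m, s m ≤ S m := by
      intro m
      cases m with
      | zero => exact Nat.le_of_eq rfl
      | succ m =>
        rw [hSsucc]
        have := le_max_right (S m) (s (m + 1))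
        omega
    have hSlt : ∀ m, S m < S (m + 1) := by
      intro m
      rw [hSsucc]
      have := le_max_left (S m) (s (m + 1))
      omega
    have hSmono : StrictMono S := strictMono_nat_of_lt_succ hSlt
    have hbpS : ∀ m, b m ≤ p (S m) := fun m => (hsp m).trans (hpm (hsS m))
    -- the block-index function `ms`
    have hq2 : Computable₂ fun n m : ℕ => n + 1 - S (m + 1) == 0 := by
      exact (Primrec.beq.to_comp.comp
        (Primrec.nat_sub.to_comp.comp (Primrec.succ.to_comp.comp Computable.fst)
          (hS.comp (Primrec.succ.to_comp.comp Computable.snd)))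
        (Computable.const 0) : Computable fun pr : ℕ × ℕ => pr.1 + 1 - S (pr.2 + 1) == 0)
    have H2 : ∀ n, ∃ m, (n + 1 - S (m + 1) == 0) = true := by
      intro n
      have h2 : n + 1 ≤ S (n + 1) := hSmono.le_apply
      exact ⟨n, by simp [Nat.sub_eq_zero_of_le h2]⟩
    obtain ⟨ms, hms, hmsspec⟩ := computable_least hq2 H2
    have hms1 : ∀ n, n < S (ms n + 1) := by
      intro n
      have h := (hmsspec n).1
      simp only [beq_iff_eq] at h
      omega
    have hms2 : ∀ n j, j < ms n → S (j + 1) ≤ n := by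
      intro n j hj
      have h := (hmsspec n).2 j hj
      simp only [beq_eq_false_iff_ne, ne_eq] at h
      omega
    have hmsle : ∀ n, S 0 ≤ n → S (ms n) ≤ n := by
      intro n hn
      cases h : ms n with
      | zero => exact hn
      | succ j => exact hms2 n j (by omega)
    -- trace the history function
    have hf' := recIn_nat.mp hf
    have hFrec : RecursiveInOracle (oracleOf A) fun m => Part.some (histf f (S (m + 1))) :=
      totalComp (histf_recursiveIn hf') (hS.comp Computable.succ)
    obtain ⟨G, hG, hGt⟩ := hT (fun m => histf f (S (m + 1))) (recIn_nat.mpr hFrec)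
    -- the trace with bound `p`
    set g : ℕ → ℕ := fun n =>
      (1 - (S 0 - n - (S 0 - n - 1))) * extractCode n (G (ms n)) (S (ms n + 1)) +
        (S 0 - n - (S 0 - n - 1)) * 2 ^ chNth (S 0 - 1 - n) (histf f (S 0)) with hgdef
    refine ⟨g, ?_, ?_⟩
    · have h1 : Computable fun n => extractCode n (G (ms n)) (S (ms n + 1)) :=
        primrec_extractCode.to_comp.comp (Computable.id.pair
          ((hG.comp hms).pair (hS.comp (Primrec.succ.to_comp.comp hms))))
      have hsel : Primrec fun n : ℕ => S 0 - n - (S 0 - n - 1) := by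
        have hx : Primrec fun n : ℕ => S 0 - n :=
          Primrec.nat_sub.comp (Primrec.const (S 0)) Primrec.id
        exact Primrec.nat_sub.comp hx (Primrec.nat_sub.comp hx (Primrec.const 1))
      have h2 : Computable fun n : ℕ => 2 ^ chNth (S 0 - 1 - n) (histf f (S 0)) :=
        Primrec.to_comp (primrec_pow.comp (Primrec.const 2) (primrec_chNth.comp
          (Primrec.nat_sub.comp (Primrec.const (S 0 - 1)) Primrec.id)
          (Primrec.const (histf f (S 0)))))
      exact Primrec.nat_add.to_comp.comp
        (Primrec.nat_mul.to_comp.comp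
          ((Primrec.nat_sub.comp (Primrec.const 1) hsel).to_comp) h1)
        (Primrec.nat_mul.to_comp.comp (hsel.to_comp) h2)
    · intro n
      by_cases hn : S 0 ≤ n
      · have hsel : S 0 - n = 0 := Nat.sub_eq_zero_of_le hn
        have hgn : g n = extractCode n (G (ms n)) (S (ms n + 1)) := by
          rw [hgdef]
          simp [hsel]
        have h1 : S (ms n) ≤ n := hmsle n hn
        have h2 : n < S (ms n + 1) := hms1 n
        rw [hgn, Dfin_extractCode]
        constructor
        · calc ((Dfin (G (ms n))).image (chNth (S (ms n + 1) - 1 - n))).card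
              ≤ (Dfin (G (ms n))).card := Finset.card_image_le
            _ ≤ b (ms n) := (hGt (ms n)).1
            _ ≤ p (S (ms n)) := hbpS (ms n)
            _ ≤ p n := hpm h1
        · refine Finset.mem_image.mpr ⟨histf f (S (ms n + 1)), (hGt (ms n)).2, ?_⟩
          rw [chNth_histf f (show S (ms n + 1) - 1 - n < S (ms n + 1) by omega)]
          congr 1
          omega
      · push_neg at hn
        have hsel : S 0 - n - (S 0 - n - 1) = 1 := by omega
        have hgn : g n = 2 ^ chNth (S 0 - 1 - n) (histf f (S 0)) := by
          rw [hgdef]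
          simp [hsel]
        rw [hgn, chNth_histf f (show S 0 - 1 - n < S 0 by omega),
          show S 0 - 1 - (S 0 - 1 - n) = n by omega, Dfin_two_pow]
        refine ⟨?_, Finset.mem_singleton_self _⟩
        simpa using le_trans hp0 (hpm (Nat.zero_le n))
  · intro h
    exact ⟨fun n => n + 1, Computable.succ,
      fun f hf => h _ Computable.succ (fun a c hac => Nat.succ_le_succ hac)
        (fun m => ⟨m, Nat.le_succ m⟩) Nat.one_pos f hf⟩
end

section
/- If the class Min = {X ∈ 2^ω : X is of minimal Turing degree} has Hausdorff dimension r ≤ 1, then every maximal antichain of Turing degrees has Hausdorff dimension at least r. -/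
open scoped ENNReal

attribute [local instance] Classical.propDecidable

-- test recursion lemmas
section RecLemmas
variable {O O' : ℕ → ℕ}

lemma recursiveIn_of_partrec {f : ℕ →. ℕ} (h : Nat.Partrec f) : RecursiveInOracle O f := by
  induction h with
  | zero => exact .zero
  | succ => exact .succ
  | left => exact .left
  | right => exact .right
  | pair _ _ ih1 ih2 => exact .pair ih1 ih2
  | comp _ _ ih1 ih2 => exact .comp ih1 ih2
  | prec _ _ ih1 ih2 => exact .prec ih1 ih2
  | rfind _ ih => exact .rfind ih

lemma RecursiveInOracle.of_eq' {f g : ℕ →. ℕ} (h : RecursiveInOracle O f) (e : ∀ n, f n = g n) :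
    RecursiveInOracle O g := (funext e : f = g) ▸ h

lemma RecursiveInOracle.trans_oracle {f : ℕ →. ℕ} (h : RecursiveInOracle O f)
    (hO : RecursiveInOracle O' (fun n => Part.some (O n))) : RecursiveInOracle O' f := by
  induction h with
  | oracle => exact hO
  | zero => exact .zero
  | succ => exact .succ
  | left => exact .left
  | right => exact .right
  | pair _ _ ih1 ih2 => exact .pair ih1 ih2
  | comp _ _ ih1 ih2 => exact .comp ih1 ih2
  | prec _ _ ih1 ih2 => exact .prec ih1 ih2
  | rfind _ ih => exact .rfind ih

lemma partrec_of_recursiveIn {f : ℕ →. ℕ} (hO : Nat.Partrec (fun n => Part.some (O n)))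
    (h : RecursiveInOracle O f) : Nat.Partrec f := by
  induction h with
  | oracle => exact hO
  | zero => exact .zero
  | succ => exact .succ
  | left => exact .left
  | right => exact .right
  | pair _ _ ih1 ih2 => exact .pair ih1 ih2
  | comp _ _ ih1 ih2 => exact .comp ih1 ih2
  | prec _ _ ih1 ih2 => exact .prec ih1 ih2
  | rfind _ ih => exact .rfind ih

example (b : Bool) : Encodable.encode b = cond b 1 0 := by cases b <;> rfl
example (n : ℕ) : (Encodable.decode (α := ℕ) n) = some n := rfl
example (n : ℕ) : Encodable.encode n = n := rfl

lemma recIn_cantor_iff {X : Cantor} :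
    RecIn O X ↔ RecursiveInOracle O (fun n => Part.some (oracleOf X n)) := by
  constructor <;> intro h <;> apply h.of_eq' <;> intro n <;>
    simp [RecIn, oracleOf] <;> cases X n <;> rfl

lemma TRed.refl (X : Cantor) : TRed X X := by
  rw [TRed, recIn_cantor_iff]; exact .oracle

lemma TRed.trans {A B C : Cantor} (h1 : TRed A B) (h2 : TRed B C) : TRed A C := by
  rw [TRed, recIn_cantor_iff] at *
  exact h1.trans_oracle h2

end RecLemmas

section RecLemmas2
variable {O : ℕ → ℕ}

lemma partrec_some_of_computable {g : ℕ → ℕ} (hg : Computable g) :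
    Nat.Partrec (fun n => Part.some (g n)) := by
  have := hg  -- Computable g : Partrec ↑g
  rw [Computable, Partrec] at this
  apply this.of_eq
  intro n
  simp [Encodable.decode, Encodable.encode]

lemma computable_oracleOf {W : Cantor} (hW : Computable W) : Computable (oracleOf W) := by
  unfold oracleOf
  exact Computable.cond hW (Computable.const 1) (Computable.const 0)

lemma computable_of_TRed {A W : Cantor} (h : TRed A W) (hW : Computable W) : Computable A := by
  have h1 : Nat.Partrec (fun n => Part.some (oracleOf W n)) :=
    partrec_some_of_computable (computable_oracleOf hW)
  rw [TRed, recIn_cantor_iff] at h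
  have h2 : Nat.Partrec (fun n => Part.some (oracleOf A n)) := partrec_of_recursiveIn h1 h
  rw [Computable, Partrec]
  apply h2.of_eq
  intro n
  simp [Encodable.decode, oracleOf]
  cases A n <;> rfl

-- composition with computable
lemma RecIn.comp_computable {f : Cantor} {g : ℕ → ℕ} (hf : RecIn O f) (hg : Computable g) :
    RecIn O (fun n => f (g n)) := by
  rw [recIn_cantor_iff] at hf ⊢
  have hg' : RecursiveInOracle O (fun n => Part.some (g n)) :=
    recursiveIn_of_partrec (partrec_some_of_computable hg)
  exact (RecursiveInOracle.comp hf hg').of_eq' (fun n => by simp [oracleOf])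

lemma RecIn.cond' {p f g : Cantor} (hp : Computable p) (hf : RecIn O f) (hg : RecIn O g) :
    RecIn O (fun n => bif p n then f n else g n) := by
  rw [recIn_cantor_iff] at hf hg ⊢
  have hid : RecursiveInOracle O (fun n : ℕ => Part.some n) :=
    recursiveIn_of_partrec (partrec_some_of_computable Computable.id)
  have h1 := RecursiveInOracle.pair hid hf
  have h2 := RecursiveInOracle.pair h1 hg
  set sel : ℕ → ℕ := fun m =>
    cond (p m.unpair.1.unpair.1) m.unpair.1.unpair.2 m.unpair.2 with hsel
  have hselc : Computable sel := by
    apply Computable.cond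
    · exact hp.comp ((Computable.fst.comp Computable.unpair).comp
        (Computable.fst.comp Computable.unpair))
    · exact (Computable.snd.comp Computable.unpair).comp
        (Computable.fst.comp Computable.unpair)
    · exact Computable.snd.comp Computable.unpair
  have h3 := RecursiveInOracle.comp (recursiveIn_of_partrec (partrec_some_of_computable hselc)) h2
  apply h3.of_eq'
  intro n
  simp [Seq.seq, hsel, oracleOf]
  cases p n <;> simp

end RecLemmas2

section Graph

/-- Cantor real coding the graph of `F`. -/
def graphReal (F : ℕ → ℕ) : Cantor := fun m => F m.unpair.1 == m.unpair.2

lemma graph_recursiveIn (F : ℕ → ℕ) :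
    RecursiveInOracle (oracleOf (graphReal F)) (fun n => Part.some (F n)) := by
  set O := oracleOf (graphReal F) with hO
  have hsub : RecursiveInOracle O (fun p => Part.some (1 - O p)) := by
    have hc : Nat.Partrec (fun m : ℕ => Part.some (1 - m)) :=
      partrec_some_of_computable ((Primrec.nat_sub.comp (Primrec.const 1) Primrec.id).to_comp)
    exact (RecursiveInOracle.comp (recursiveIn_of_partrec hc) .oracle).of_eq' (fun n => by simp)
  have h := RecursiveInOracle.rfind hsub
  apply h.of_eq'
  intro a
  rw [Part.eq_some_iff]
  refine Nat.mem_rfind.2 ⟨?_, ?_⟩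
  · simp [hO, oracleOf, graphReal, Nat.unpair_pair]
  · intro k hk
    have hne : (F a == k) = false := by simp; omega
    simp [hO, oracleOf, graphReal, Nat.unpair_pair, hne]

lemma recIn_graph {α β : Type} [Primcodable α] [Primcodable β] (q : α → β) :
    RecIn (oracleOf (graphReal (fun n =>
      Encodable.encode ((Encodable.decode (α := α) n).map q)))) q := by
  set F : ℕ → ℕ := fun n => Encodable.encode ((Encodable.decode (α := α) n).map q) with hF
  have h1 := graph_recursiveIn F
  have hpp : RecursiveInOracle (oracleOf (graphReal F)) (fun m => Part.ofOption m.ppred) :=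
    recursiveIn_of_partrec Nat.Partrec.ppred
  have h2 := RecursiveInOracle.comp hpp h1
  apply h2.of_eq'
  intro n
  simp only [hF]
  rcases h : Encodable.decode (α := α) n with _ | a <;>
    simp [h, Part.ofOption]

end Graph

section Deg

lemma TEquiv.refl' (X : Cantor) : TEquiv X X := ⟨TRed.refl X, TRed.refl X⟩
lemma TEquiv.symm' {X Y : Cantor} (h : TEquiv X Y) : TEquiv Y X := ⟨h.2, h.1⟩
lemma TEquiv.trans' {X Y Z : Cantor} (h1 : TEquiv X Y) (h2 : TEquiv Y Z) : TEquiv X Z :=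
  ⟨h1.1.trans h2.1, h2.2.trans h1.2⟩

lemma exists_above {B : Set Cantor} (hB : MaximalAntichainDeg B) {X : Cantor}
    (hX : MinimalDeg X) (hXB : X ∉ B) : ∃ Y ∈ B, TRed X Y := by
  have hfail := hB.2 X hXB
  by_contra hno
  push_neg at hno
  apply hfail
  refine ⟨?_, ?_, ?_⟩
  · rintro W (hW | hW)
    · exact hB.1.1 W hW
    · exact fun hc => hX.1 (computable_of_TRed hW.2 hc)
  · rintro W (hW | hW) Y hYW
    · exact Or.inl (hB.1.2.1 W hW Y hYW)
    · exact Or.inr (hYW.trans' hW)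
  · rintro U (hU | hU) V (hV | hV) hne
    · exact hB.1.2.2 U hU V hV hne
    · constructor
      · intro hr
        have hUX : TRed U X := hr.trans hV.1
        rcases hX.2 U hUX with hc | hXU
        · exact hB.1.1 U hU hc
        · exact hXB (hB.1.2.1 U hU X ⟨hXU, hUX⟩)
      · exact fun hr => hno U hU (hV.2.trans hr)
    · constructor
      · exact fun hr => hno V hV (hU.2.trans hr)
      · intro hr
        have hVX : TRed V X := hr.trans hU.1
        rcases hX.2 V hVX with hc | hXV
        · exact hB.1.1 V hV hc
        · exact hno V hV hXV
    · exact absurd (hU.trans' (hV.symm')) hne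

end Deg

section Embd

def embd (j : ℕ) (X Y : Cantor) : Cantor :=
  fun n => bif n % j == j - 1 then Y (n / j) else X (n - n / j)

lemma TRed_embd_to {j : ℕ} {X Y : Cantor} (hXY : TRed X Y) : TRed (embd j X Y) Y := by
  have hp : Computable fun n : ℕ => n % j == j - 1 :=
    (Primrec.beq.comp (Primrec.nat_mod.comp Primrec.id (Primrec.const j))
      (Primrec.const (j - 1))).to_comp
  have h1 : RecIn (oracleOf Y) fun n : ℕ => Y (n / j) :=
    RecIn.comp_computable (TRed.refl Y)
      ((Primrec.nat_div.comp Primrec.id (Primrec.const j)).to_comp)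
  have h2 : RecIn (oracleOf Y) fun n : ℕ => X (n - n / j) :=
    RecIn.comp_computable hXY
      ((Primrec.nat_sub.comp Primrec.id
        (Primrec.nat_div.comp Primrec.id (Primrec.const j))).to_comp)
  exact RecIn.cond' hp h1 h2

lemma TRed_embd_from {j : ℕ} (hj : 2 ≤ j) (X Y : Cantor) : TRed Y (embd j X Y) := by
  have hg : Computable fun k : ℕ => (j - 1) + j * k :=
    (Primrec.nat_add.comp (Primrec.const (j - 1))
      (Primrec.nat_mul.comp (Primrec.const j) Primrec.id)).to_comp
  have h := RecIn.comp_computable (TRed.refl (embd j X Y)) hg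
  have he : (fun k : ℕ => embd j X Y ((j - 1) + j * k)) = Y := by
    funext k
    have h1 : ((j - 1) + j * k) % j = j - 1 := by
      rw [Nat.add_mul_mod_self_left, Nat.mod_eq_of_lt (by omega)]
    have h2 : ((j - 1) + j * k) / j = k := by
      rw [Nat.add_mul_div_left _ _ (by omega : 0 < j), Nat.div_eq_of_lt (by omega)]
      omega
    simp [embd, h1, h2]
  rwa [he] at h

lemma embd_mem {j : ℕ} (hj : 2 ≤ j) {B : Set Cantor} (hB : IsAntichainDeg B)
    {X Y : Cantor} (hY : Y ∈ B) (hXY : TRed X Y) : embd j X Y ∈ B :=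
  hB.2.1 Y hY _ ⟨TRed_embd_to hXY, TRed_embd_from hj X Y⟩

end Embd

section Weave

lemma aux_ns {j t u p : ℕ} (hj : 2 ≤ j) (hu : u ≤ j - 2) (hp : p < j * t + u)
    (hps : p % j ≠ j - 1) : p - p / j < (j - 1) * t + u := by
  have hd := Nat.div_add_mod p j
  have hvj : p % j < j := Nat.mod_lt _ (by omega)
  have e1 : (j - 1) * (p / j) = j * (p / j) - p / j := by rw [Nat.sub_one_mul]
  have e2 : p / j ≤ j * (p / j) := Nat.le_mul_of_pos_left _ (by omega)
  have e3 : (j - 1) * t = j * t - t := by rw [Nat.sub_one_mul]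
  have e4 : t ≤ j * t := Nat.le_mul_of_pos_left t (by omega)
  rcases lt_or_ge (p / j) t with h | h
  · have h2 : (j - 1) * (p / j + 1) ≤ (j - 1) * t := Nat.mul_le_mul_left _ h
    have h3 : (j - 1) * (p / j + 1) = (j - 1) * (p / j) + (j - 1) := by rw [Nat.mul_succ]
    omega
  · have h5 : j * (t + 1) = j * t + j := by rw [Nat.mul_succ]
    have h6 : j * (p / j) < j * (t + 1) := by omega
    have h7 : p / j < t + 1 := Nat.lt_of_mul_lt_mul_left h6
    have hqt : p / j = t := by omega
    rw [hqt] at hd e1 e2 ⊢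
    omega

lemma aux_sp {j t u p : ℕ} (hj : 2 ≤ j) (hu : u ≤ j - 1) (hp : p < j * t + u)
    (hps : p % j = j - 1) : p / j < t := by
  have hd := Nat.div_add_mod p j
  by_contra h
  push_neg at h
  have h1 : j * t ≤ j * (p / j) := Nat.mul_le_mul_left _ h
  omega

/-- interleave: σ-bits off the sparse positions, τ-bits on them -/
def wv (j : ℕ) (σ τ : List Bool) : List Bool :=
  (List.range (σ.length + σ.length / (j - 1))).map fun p =>
    bif p % j == j - 1 then τ.getD (p / j) false else σ.getD (p - p / j) false

lemma wv_length (j : ℕ) (σ τ : List Bool) :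
    (wv j σ τ).length = σ.length + σ.length / (j - 1) := by simp [wv]

lemma seg_length (X : Cantor) (n : ℕ) : (seg X n).length = n := by simp [seg]

lemma seg_getD (X : Cantor) {n i : ℕ} (h : i < n) : (seg X n).getD i false = X i := by
  rw [List.getD_eq_getElem _ _ (by simp [seg_length, h])]
  simp [seg]

lemma seg_succ (X : Cantor) (n : ℕ) : seg X (n + 1) = seg X n ++ [X n] := by
  simp [seg, List.range_succ]

lemma strOfNat_length (len k : ℕ) : (strOfNat len k).length = len := by simp [strOfNat]

end Weave

section WeaveStep
variable {j : ℕ}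

lemma jt_split (hj : 2 ≤ j) (m : ℕ) :
    m + m / (j - 1) = j * (m / (j - 1)) + m % (j - 1) := by
  have hd := Nat.div_add_mod m (j - 1)
  have e3 : (j - 1) * (m / (j - 1)) = j * (m / (j - 1)) - m / (j - 1) := by
    rw [Nat.sub_one_mul]
  have e4 : m / (j - 1) ≤ j * (m / (j - 1)) := Nat.le_mul_of_pos_left _ (by omega)
  omega

lemma wv_getElem (hj : 2 ≤ j) (σ τ : List Bool) {p : ℕ}
    (h : p < σ.length + σ.length / (j - 1)) :
    (wv j σ τ)[p]'(by rw [wv_length]; exact h) =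
      bif p % j == j - 1 then τ.getD (p / j) false else σ.getD (p - p / j) false := by
  simp [wv]

lemma wv_step_nb (hj : 2 ≤ j) {σ : List Bool} (τ : List Bool) (b : Bool)
    (hu : σ.length % (j - 1) + 1 < j - 1) :
    wv j (σ ++ [b]) τ = wv j σ τ ++ [b] := by
  have hj1 : 0 < j - 1 := by omega
  have hd := Nat.div_add_mod σ.length (j - 1)
  have hmt := jt_split hj σ.length
  have hdiv : (σ.length + 1) / (j - 1) = σ.length / (j - 1) := by
    have h0 : σ.length + 1 = (j - 1) * (σ.length / (j - 1)) + (σ.length % (j - 1) + 1) := by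
      omega
    rw [h0, Nat.mul_add_div hj1]
    have h1 : (σ.length % (j - 1) + 1) / (j - 1) = 0 := Nat.div_eq_of_lt (by omega)
    omega
  have hlen2 : (σ ++ [b]).length = σ.length + 1 := by simp
  have hlenw : (σ ++ [b]).length + (σ ++ [b]).length / (j - 1)
      = (σ.length + σ.length / (j - 1)) + 1 := by rw [hlen2, hdiv]; omega
  apply List.ext_getElem
  · rw [wv_length, hlenw, List.length_append, wv_length, List.length_singleton]
  · intro p h1 h2
    rw [wv_length, hlenw] at h1
    by_cases hp : p < σ.length + σ.length / (j - 1)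
    · rw [List.getElem_append_left (by rw [wv_length]; exact hp)]
      rw [wv_getElem hj _ _ (by rw [hlenw]; omega), wv_getElem hj _ _ hp]
      by_cases hs : p % j = j - 1
      · simp [hs]
      · have hbeq : (p % j == j - 1) = false := by simp [hs]
        rw [hbeq]
        simp only [cond_false]
        have hlt : p - p / j < σ.length := by
          have := aux_ns hj (by omega : σ.length % (j - 1) ≤ j - 2)
            (by omega : p < j * (σ.length / (j - 1)) + σ.length % (j - 1)) hs
          omega
        rw [List.getD_append _ _ _ _ hlt]
    · have hpe : p = σ.length + σ.length / (j - 1) := by omega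
      rw [List.getElem_append_right (by rw [wv_length]; omega)]
      rw [wv_getElem hj _ _ (by rw [hlenw]; omega)]
      have hs : p % j = σ.length % (j - 1) := by
        rw [hpe, hmt, Nat.mul_add_mod, Nat.mod_eq_of_lt (by omega)]
      have hbeq : (p % j == j - 1) = false := by simp; omega
      rw [hbeq]
      simp only [cond_false]
      have hdivp : p / j = σ.length / (j - 1) := by
        rw [hpe, hmt, Nat.mul_add_div (by omega)]
        have h1 : σ.length % (j - 1) / j = 0 := Nat.div_eq_of_lt (by omega)
        omega
      have hidx : p - p / j = σ.length := by omega
      rw [hidx, List.getD_append_right _ _ _ _ (le_refl _)]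
      simp [wv_length, hpe]

end WeaveStep

section WeaveStep2
variable {j : ℕ}

lemma wv_step_bd (hj : 2 ≤ j) {σ τ : List Bool} (b c : Bool)
    (hu : σ.length % (j - 1) + 1 = j - 1) (hτ : τ.length = σ.length / (j - 1)) :
    wv j (σ ++ [b]) (τ ++ [c]) = wv j σ τ ++ [b, c] := by
  have hj1 : 0 < j - 1 := by omega
  have hd := Nat.div_add_mod σ.length (j - 1)
  have hmt := jt_split hj σ.length
  have hdiv : (σ.length + 1) / (j - 1) = σ.length / (j - 1) + 1 := by
    have h0 : σ.length + 1 = (j - 1) * (σ.length / (j - 1) + 1) := by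
      rw [Nat.mul_succ]; omega
    rw [h0, Nat.mul_div_cancel_left _ hj1]
  have hlen2 : (σ ++ [b]).length = σ.length + 1 := by simp
  have hlenw : (σ ++ [b]).length + (σ ++ [b]).length / (j - 1)
      = (σ.length + σ.length / (j - 1)) + 2 := by rw [hlen2, hdiv]; omega
  apply List.ext_getElem
  · rw [wv_length, hlenw]; simp [wv_length]
  · intro p h1 h2
    rw [wv_length, hlenw] at h1
    rcases (by omega : p < σ.length + σ.length / (j - 1) ∨
        p = σ.length + σ.length / (j - 1) ∨ p = σ.length + σ.length / (j - 1) + 1)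
      with hp | hp | hp
    · rw [List.getElem_append_left (by rw [wv_length]; exact hp)]
      rw [wv_getElem hj _ _ (by rw [hlenw]; omega), wv_getElem hj _ _ hp]
      by_cases hs : p % j = j - 1
      · have hsb : (p % j == j - 1) = true := by simp [hs]
        rw [hsb]
        simp only [cond_true]
        have hlt : p / j < σ.length / (j - 1) := by
          exact aux_sp hj (by omega : σ.length % (j - 1) ≤ j - 1)
            (by omega : p < j * (σ.length / (j - 1)) + σ.length % (j - 1)) hs
        rw [List.getD_append _ _ _ _ (by omega)]
      · have hbeq : (p % j == j - 1) = false := by simp [hs]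
        rw [hbeq]
        simp only [cond_false]
        have hlt : p - p / j < σ.length := by
          have := aux_ns hj (by omega : σ.length % (j - 1) ≤ j - 2)
            (by omega : p < j * (σ.length / (j - 1)) + σ.length % (j - 1)) hs
          omega
        rw [List.getD_append _ _ _ _ hlt]
    · rw [List.getElem_append_right (by rw [wv_length]; omega)]
      rw [wv_getElem hj _ _ (by rw [hlenw]; omega)]
      have hs : p % j = j - 2 := by
        rw [hp, hmt, Nat.mul_add_mod, Nat.mod_eq_of_lt (by omega)]; omega
      have hbeq : (p % j == j - 1) = false := by simp; omega
      rw [hbeq]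
      simp only [cond_false]
      have hdivp : p / j = σ.length / (j - 1) := by
        rw [hp, hmt, Nat.mul_add_div (by omega)]
        have h3 : σ.length % (j - 1) / j = 0 := Nat.div_eq_of_lt (by omega)
        omega
      have hidx : p - p / j = σ.length := by omega
      rw [hidx, List.getD_append_right _ _ _ _ (le_refl _)]
      simp [wv_length, hp]
    · rw [List.getElem_append_right (by rw [wv_length]; omega)]
      rw [wv_getElem hj _ _ (by rw [hlenw]; omega)]
      have hs : p % j = j - 1 := by
        have h0 : p = j * (σ.length / (j - 1)) + (j - 1) := by omega
        rw [h0, Nat.mul_add_mod, Nat.mod_eq_of_lt (by omega)]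
      have hsb : (p % j == j - 1) = true := by simp [hs]
      rw [hsb]
      simp only [cond_true]
      have hdivp : p / j = σ.length / (j - 1) := by
        have h0 : p = j * (σ.length / (j - 1)) + (j - 1) := by omega
        rw [h0, Nat.mul_add_div (by omega)]
        have h3 : (j - 1) / j = 0 := Nat.div_eq_of_lt (by omega)
        omega
      rw [hdivp, List.getD_append_right _ _ _ _ (by omega : τ.length ≤ σ.length / (j - 1))]
      have h4 : σ.length / (j - 1) - τ.length = 0 := by omega
      rw [h4]
      simp [wv_length, hp]

end WeaveStep2

section SegWeave
variable {j : ℕ}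

lemma seg_embd (hj : 2 ≤ j) (X Y : Cantor) (t : ℕ) :
    seg (embd j X Y) (j * t) = wv j (seg X ((j - 1) * t)) (seg Y t) := by
  have hj1 : 0 < j - 1 := by omega
  have hlen : (seg X ((j - 1) * t)).length = (j - 1) * t := seg_length _ _
  have hdiv : ((j - 1) * t) / (j - 1) = t := Nat.mul_div_cancel_left _ hj1
  have hjt : (j - 1) * t + t = j * t := by
    have : (j - 1) * t = j * t - t := by rw [Nat.sub_one_mul]
    have : t ≤ j * t := Nat.le_mul_of_pos_left t (by omega)
    omega
  apply List.ext_getElem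
  · rw [seg_length, wv_length, hlen, hdiv]; omega
  · intro p h1 h2
    rw [seg_length] at h1
    have hp : p < (seg X ((j - 1) * t)).length + (seg X ((j - 1) * t)).length / (j - 1) := by
      rw [hlen, hdiv]; omega
    rw [wv_getElem hj _ _ hp]
    have hsl : (seg (embd j X Y) (j * t))[p] = embd j X Y p := by simp [seg]
    rw [hsl]
    rw [embd]
    by_cases hs : p % j = j - 1
    · have hsb : (p % j == j - 1) = true := by simp [hs]
      rw [hsb]
      simp only [cond_true]
      have hlt : p / j < t := by
        refine aux_sp hj (by omega : (0:ℕ) ≤ j - 1) (by omega : p < j * t + 0) hs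
      rw [seg_getD _ hlt]
    · have hbeq : (p % j == j - 1) = false := by simp [hs]
      rw [hbeq]
      simp only [cond_false]
      have hlt : p - p / j < (j - 1) * t := by
        have := aux_ns hj (by omega : (0:ℕ) ≤ j - 2) (by omega : p < j * t + 0) hs
        omega
      rw [seg_getD _ hlt]

lemma natOfStr_concat (ρ : List Bool) (b : Bool) :
    natOfStr (ρ ++ [b]) = 2 * natOfStr ρ + cond b 1 0 := by
  simp [natOfStr, List.foldl_append]

lemma natOfStr_lt (ρ : List Bool) : natOfStr ρ < 2 ^ ρ.length := by
  induction ρ using List.reverseRecOn with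
  | nil => simp [natOfStr]
  | append_singleton ρ b ih =>
      rw [natOfStr_concat]
      simp only [List.length_append, List.length_singleton, pow_succ]
      cases b <;> simp <;> omega

lemma strOfNat_succ (t k : ℕ) :
    strOfNat (t + 1) k = strOfNat t (k / 2) ++ [k.testBit 0] := by
  apply List.ext_getElem
  · simp [strOfNat_length]
  · intro p h1 h2
    rw [strOfNat_length] at h1
    rcases (by omega : p < t ∨ p = t) with hp | hp
    · rw [List.getElem_append_left (by rw [strOfNat_length]; exact hp)]
      simp only [strOfNat, List.getElem_map, List.getElem_range]
      have h3 : t + 1 - 1 - p = (t - 1 - p) + 1 := by omega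
      rw [h3, ← Nat.testBit_div_two]
    · rw [List.getElem_append_right (by rw [strOfNat_length]; omega)]
      simp only [strOfNat, List.getElem_map, List.getElem_range]
      have h3 : t + 1 - 1 - p = 0 := by omega
      rw [h3]
      simp [strOfNat_length, hp]

lemma strOfNat_natOfStr (ρ : List Bool) : strOfNat ρ.length (natOfStr ρ) = ρ := by
  induction ρ using List.reverseRecOn with
  | nil => simp [strOfNat]
  | append_singleton ρ b ih =>
      rw [natOfStr_concat]
      simp only [List.length_append, List.length_singleton]
      rw [strOfNat_succ]
      have h1 : (2 * natOfStr ρ + cond b 1 0) / 2 = natOfStr ρ := by cases b <;> simp <;> omega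
      have h2 : (2 * natOfStr ρ + cond b 1 0).testBit 0 = b := by
        rw [Nat.testBit_zero]
        cases b <;> simp [Nat.add_mul_mod_self_left] <;> omega
      rw [h1, h2, ih]

lemma sum_range_two_mul (n : ℕ) (f : ℕ → ℝ) :
    ∑ k ∈ Finset.range (2 * n), f k = ∑ q ∈ Finset.range n, (f (2 * q) + f (2 * q + 1)) := by
  induction n with
  | zero => simp
  | succ n ih =>
      have h : 2 * (n + 1) = (2 * n + 1) + 1 := by omega
      rw [h, Finset.sum_range_succ, Finset.sum_range_succ, Finset.sum_range_succ, ih]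
      ring

end SegWeave

section Avgd
variable {j : ℕ} {d : List Bool → ℝ}

noncomputable def avgd (j : ℕ) (d : List Bool → ℝ) (σ : List Bool) : ℝ :=
  (∑ k ∈ Finset.range (2 ^ (σ.length / (j - 1))),
    d (wv j σ (strOfNat (σ.length / (j - 1)) k))) / 2 ^ (σ.length / (j - 1))

lemma avgd_nonneg (hd : IsSupermartingale d) (σ : List Bool) : 0 ≤ avgd j d σ :=
  div_nonneg (Finset.sum_nonneg fun _ _ => hd.1 _) (by positivity)

lemma d_concat_le (hd : IsSupermartingale d) (σ : List Bool) (b : Bool) :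
    d (σ ++ [b]) ≤ 2 * d σ := by
  have h1 := hd.2 σ
  have h2 := hd.1 (σ ++ [false])
  have h3 := hd.1 (σ ++ [true])
  cases b <;> linarith

lemma d_seg_le_pow (hd : IsSupermartingale d) (A : Cantor) (n k : ℕ) :
    d (seg A (n + k)) ≤ 2 ^ k * d (seg A n) := by
  induction k with
  | zero => simp
  | succ k ih =>
      have h1 : seg A (n + (k + 1)) = seg A (n + k) ++ [A (n + k)] := seg_succ A (n + k)
      calc d (seg A (n + (k + 1))) ≤ 2 * d (seg A (n + k)) := h1 ▸ d_concat_le hd _ _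
        _ ≤ 2 * (2 ^ k * d (seg A n)) := by
            have := hd.1 (seg A n)
            nlinarith
        _ = 2 ^ (k + 1) * d (seg A n) := by ring

lemma avgd_key (hj : 2 ≤ j) (hd : IsSupermartingale d) (σ : List Bool) (b : Bool) :
    avgd j d (σ ++ [b]) ≤ (∑ k ∈ Finset.range (2 ^ (σ.length / (j - 1))),
      d (wv j σ (strOfNat (σ.length / (j - 1)) k) ++ [b])) / 2 ^ (σ.length / (j - 1)) := by
  have hj1 : 0 < j - 1 := by omega
  have hd' := Nat.div_add_mod σ.length (j - 1)
  have hum : σ.length % (j - 1) < j - 1 := Nat.mod_lt _ hj1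
  have hlen2 : (σ ++ [b]).length = σ.length + 1 := by simp
  rcases (by omega : σ.length % (j - 1) + 1 < j - 1 ∨ σ.length % (j - 1) + 1 = j - 1)
    with hc | hc
  · have hdiv : (σ.length + 1) / (j - 1) = σ.length / (j - 1) := by
      have h0 : σ.length + 1 = (j - 1) * (σ.length / (j - 1)) + (σ.length % (j - 1) + 1) := by
        omega
      rw [h0, Nat.mul_add_div hj1]
      have h1 : (σ.length % (j - 1) + 1) / (j - 1) = 0 := Nat.div_eq_of_lt (by omega)
      omega
    apply le_of_eq
    rw [avgd, hlen2, hdiv]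
    congr 1
    apply Finset.sum_congr rfl
    intro k _
    rw [wv_step_nb hj _ b hc]
  · have hdiv : (σ.length + 1) / (j - 1) = σ.length / (j - 1) + 1 := by
      have h0 : σ.length + 1 = (j - 1) * (σ.length / (j - 1) + 1) := by rw [Nat.mul_succ]; omega
      rw [h0, Nat.mul_div_cancel_left _ hj1]
    rw [avgd, hlen2, hdiv]
    have h2 : (2:ℕ) ^ (σ.length / (j - 1) + 1) = 2 * 2 ^ (σ.length / (j - 1)) := by ring
    rw [h2, sum_range_two_mul]
    have hstep : ∀ q ∈ Finset.range (2 ^ (σ.length / (j - 1))),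
        d (wv j (σ ++ [b]) (strOfNat (σ.length / (j - 1) + 1) (2 * q))) +
        d (wv j (σ ++ [b]) (strOfNat (σ.length / (j - 1) + 1) (2 * q + 1))) ≤
        2 * d (wv j σ (strOfNat (σ.length / (j - 1)) q) ++ [b]) := by
      intro q _
      have e0 : (2 * q) / 2 = q := by omega
      have e1 : (2 * q + 1) / 2 = q := by omega
      have e2 : (2 * q).testBit 0 = false := by simp [Nat.testBit_zero]
      have e3 : (2 * q + 1).testBit 0 = true := by
        simp [Nat.testBit_zero, Nat.add_mul_mod_self_left]
      rw [strOfNat_succ, strOfNat_succ, e0, e1, e2, e3,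
        wv_step_bd hj b false hc (strOfNat_length _ _),
        wv_step_bd hj b true hc (strOfNat_length _ _)]
      have ha : ∀ c : Bool, wv j σ (strOfNat (σ.length / (j - 1)) q) ++ [b, c] =
          (wv j σ (strOfNat (σ.length / (j - 1)) q) ++ [b]) ++ [c] := by
        intro c; simp
      rw [ha false, ha true]
      exact hd.2 _
    have hpos : (0:ℝ) < 2 ^ (σ.length / (j - 1)) := by positivity
    rw [div_le_div_iff₀ (by positivity) hpos]
    push_cast
    calc (∑ q ∈ Finset.range (2 ^ (σ.length / (j - 1))),
            (d (wv j (σ ++ [b]) (strOfNat (σ.length / (j - 1) + 1) (2 * q))) +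
             d (wv j (σ ++ [b]) (strOfNat (σ.length / (j - 1) + 1) (2 * q + 1))))) *
          (2:ℝ) ^ (σ.length / (j - 1))
        ≤ (∑ q ∈ Finset.range (2 ^ (σ.length / (j - 1))),
            2 * d (wv j σ (strOfNat (σ.length / (j - 1)) q) ++ [b])) *
          (2:ℝ) ^ (σ.length / (j - 1)) := by
          apply mul_le_mul_of_nonneg_right (Finset.sum_le_sum hstep) (le_of_lt hpos)
      _ = (∑ k ∈ Finset.range (2 ^ (σ.length / (j - 1))),
            d (wv j σ (strOfNat (σ.length / (j - 1)) k) ++ [b])) *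
          (2 * 2 ^ (σ.length / (j - 1))) := by
          rw [← Finset.mul_sum]; ring
      _ = (∑ k ∈ Finset.range (2 ^ (σ.length / (j - 1))),
            d (wv j σ (strOfNat (σ.length / (j - 1)) k) ++ [b])) *
          (2:ℝ) ^ (σ.length / (j - 1) + 1) := by rw [pow_succ]; ring

lemma avgd_super (hj : 2 ≤ j) (hd : IsSupermartingale d) : IsSupermartingale (avgd j d) := by
  refine ⟨avgd_nonneg hd, fun σ => ?_⟩
  have h1 := avgd_key hj hd σ false
  have h2 := avgd_key hj hd σ true
  have hpos : (0:ℝ) < 2 ^ (σ.length / (j - 1)) := by positivity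
  have h3 : (∑ k ∈ Finset.range (2 ^ (σ.length / (j - 1))),
        d (wv j σ (strOfNat (σ.length / (j - 1)) k) ++ [false])) +
      (∑ k ∈ Finset.range (2 ^ (σ.length / (j - 1))),
        d (wv j σ (strOfNat (σ.length / (j - 1)) k) ++ [true])) ≤
      2 * ∑ k ∈ Finset.range (2 ^ (σ.length / (j - 1))),
        d (wv j σ (strOfNat (σ.length / (j - 1)) k)) := by
    rw [← Finset.sum_add_distrib, Finset.mul_sum]
    exact Finset.sum_le_sum fun k _ => hd.2 _
  have h4 : (∑ k ∈ Finset.range (2 ^ (σ.length / (j - 1))),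
        d (wv j σ (strOfNat (σ.length / (j - 1)) k) ++ [false])) / 2 ^ (σ.length / (j - 1)) +
      (∑ k ∈ Finset.range (2 ^ (σ.length / (j - 1))),
        d (wv j σ (strOfNat (σ.length / (j - 1)) k) ++ [true])) / 2 ^ (σ.length / (j - 1)) ≤
      2 * avgd j d σ := by
    rw [← add_div, avgd]
    rw [show (2:ℝ) * ((∑ k ∈ Finset.range (2 ^ (σ.length / (j - 1))),
      d (wv j σ (strOfNat (σ.length / (j - 1)) k))) / 2 ^ (σ.length / (j - 1))) =
      (2 * ∑ k ∈ Finset.range (2 ^ (σ.length / (j - 1))),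
        d (wv j σ (strOfNat (σ.length / (j - 1)) k))) / 2 ^ (σ.length / (j - 1)) by ring]
    exact (div_le_div_iff_of_pos_right hpos).2 h3
  linarith

lemma avgd_ge (hj : 2 ≤ j) (hd : IsSupermartingale d) (X Y : Cantor) (t : ℕ) :
    d (seg (embd j X Y) (j * t)) / 2 ^ t ≤ avgd j d (seg X ((j - 1) * t)) := by
  have hj1 : 0 < j - 1 := by omega
  have hdiv : (seg X ((j - 1) * t)).length / (j - 1) = t := by
    rw [seg_length, Nat.mul_div_cancel_left _ hj1]
  rw [seg_embd hj, avgd, hdiv]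
  have hpos : (0:ℝ) < 2 ^ t := by positivity
  apply (div_le_div_iff_of_pos_right hpos).2
  have hkmem : natOfStr (seg Y t) ∈ Finset.range (2 ^ t) := by
    rw [Finset.mem_range]
    have := natOfStr_lt (seg Y t)
    rwa [seg_length] at this
  have hrw : strOfNat t (natOfStr (seg Y t)) = seg Y t := by
    have := strOfNat_natOfStr (seg Y t)
    rwa [seg_length] at this
  have := Finset.single_le_sum
    (f := fun k => d (wv j (seg X ((j - 1) * t)) (strOfNat t k)))
    (fun k _ => hd.1 _) hkmem
  simpa [hrw] using this

end Avgd

section LSC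

lemma lsc_graph (D : List Bool → ℝ) :
    ∃ Z : Cantor, LowerSemicomputableIn (oracleOf Z) D := by
  classical
  set q : List Bool × ℕ → ℚ := fun p => (⌊D p.1 * 2 ^ p.2⌋ : ℚ) / 2 ^ p.2 with hq
  refine ⟨_, q, recIn_graph q, ?_, ?_⟩
  · intro σ
    apply monotone_nat_of_le_succ
    intro n
    show (⌊D σ * 2 ^ n⌋ : ℚ) / 2 ^ n ≤ (⌊D σ * 2 ^ (n + 1)⌋ : ℚ) / 2 ^ (n + 1)
    have key : 2 * ⌊D σ * 2 ^ n⌋ ≤ ⌊D σ * 2 ^ (n + 1)⌋ := by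
      rw [Int.le_floor]
      push_cast
      have h1 := Int.floor_le (D σ * 2 ^ n)
      rw [pow_succ]
      nlinarith
    rw [div_le_div_iff₀ (by positivity) (by positivity)]
    have key' : ((2 * ⌊D σ * 2 ^ n⌋ : ℤ) : ℚ) ≤ (⌊D σ * 2 ^ (n + 1)⌋ : ℚ) := by
      exact_mod_cast key
    have hp : (0:ℚ) < 2 ^ n := by positivity
    rw [pow_succ]
    push_cast at key' ⊢
    nlinarith
  · intro σ
    have hle : ∀ n : ℕ, ((q (σ, n)) : ℝ) ≤ D σ := by
      intro n
      show ((((⌊D σ * 2 ^ n⌋ : ℚ) / 2 ^ n) : ℚ) : ℝ) ≤ D σ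
      push_cast
      rw [div_le_iff₀ (by positivity)]
      exact Int.floor_le _
    have hge : ∀ n : ℕ, D σ - (1 / 2) ^ n ≤ ((q (σ, n)) : ℝ) := by
      intro n
      show D σ - (1 / 2) ^ n ≤ ((((⌊D σ * 2 ^ n⌋ : ℚ) / 2 ^ n) : ℚ) : ℝ)
      push_cast
      rw [le_div_iff₀ (by positivity)]
      have h1 := Int.sub_one_lt_floor (D σ * 2 ^ n)
      have h2 : ((1:ℝ) / 2) ^ n * 2 ^ n = 1 := by
        rw [← mul_pow]; norm_num
      nlinarith
    refine tendsto_of_tendsto_of_tendsto_of_le_of_le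
      (g := fun n : ℕ => D σ - (1 / 2) ^ n) (h := fun _ : ℕ => D σ) ?_ ?_ hge hle
    · have h0 : Filter.Tendsto (fun n : ℕ => ((1:ℝ) / 2) ^ n) Filter.atTop (nhds 0) := by
        apply tendsto_pow_atTop_nhds_zero_of_lt_one <;> norm_num
      have := Filter.Tendsto.sub (tendsto_const_nhds (x := D σ) (f := Filter.atTop)) h0
      simpa using this
    · exact tendsto_const_nhds

lemma succeeds_mono_rate {d : List Bool → ℝ} (hd : IsSupermartingale d) {s s' : ℚ}
    (h : (s : ℝ) ≤ (s' : ℝ)) {X : Cantor} (hs : Succeeds d s X) : Succeeds d s' X := by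
  intro C
  rcases le_or_gt C 0 with hC | hC
  · refine ⟨0, ?_⟩
    have h1 : ((1:ℝ) - s') * (0:ℕ) = 0 := by simp
    rw [h1, Real.rpow_zero, mul_one]
    exact le_trans hC (hd.1 _)
  · obtain ⟨n, hn⟩ := hs C
    refine ⟨n, le_trans ?_ hn⟩
    have hexp : (2:ℝ) ^ ((1 - (s':ℝ)) * n) ≤ (2:ℝ) ^ ((1 - (s:ℝ)) * n) := by
      apply Real.rpow_le_rpow_of_exponent_le (by norm_num)
      have h2 : (0:ℝ) ≤ (n:ℝ) := Nat.cast_nonneg n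
      nlinarith
    exact mul_le_mul_of_nonneg_left hexp (le_of_lt hC)

lemma succeeds_le {d D : List Bool → ℝ} (h : ∀ σ, d σ ≤ D σ) {s : ℚ} {X : Cantor}
    (hs : Succeeds d s X) : Succeeds D s X := by
  intro C
  obtain ⟨n, hn⟩ := hs C
  exact ⟨n, le_trans hn (h _)⟩

lemma super_add {d d' : List Bool → ℝ} (h1 : IsSupermartingale d) (h2 : IsSupermartingale d') :
    IsSupermartingale (fun σ => d σ + d' σ) := by
  refine ⟨fun σ => add_nonneg (h1.1 σ) (h2.1 σ), fun σ => ?_⟩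
  have := h1.2 σ
  have := h2.2 σ
  dsimp only
  linarith

end LSC

section Transfer

lemma seg_zero (A : Cantor) : seg A 0 = [] := by simp [seg]

set_option maxHeartbeats 1000000 in
lemma succeeds_transfer {j : ℕ} (hj : 2 ≤ j) {d : List Bool → ℝ} (hd : IsSupermartingale d)
    {s s' : ℚ} (hs0 : (0:ℝ) ≤ (s:ℝ)) (hs1 : (s:ℝ) ≤ 1) (hss' : (s:ℝ) < (s':ℝ))
    (hjs : (s':ℝ) < (j:ℝ) * ((s':ℝ) - (s:ℝ)))
    (X Y : Cantor) (hsuc : Succeeds d s (embd j X Y)) :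
    Succeeds (avgd j d) s' X := by
  set E := embd j X Y with hE
  set d0 := d [] with hd0def
  have hEb : ∀ n : ℕ, d (seg E n) ≤ 2 ^ n * d0 := by
    intro n
    have := d_seg_le_pow hd E 0 n
    rwa [zero_add, seg_zero] at this
  intro C
  by_cases hd0 : d0 ≤ 0
  · exfalso
    obtain ⟨n, hn⟩ := hsuc 1
    have h1 := hEb n
    have hp : (0:ℝ) < (2:ℝ) ^ ((1 - (s:ℝ)) * n) := Real.rpow_pos_of_pos two_pos _
    have hq : (0:ℝ) < (2:ℝ) ^ n := by positivity
    nlinarith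
  push_neg at hd0
  by_cases hs00 : (s:ℝ) ≤ 0
  · exfalso
    have hseq : (s:ℝ) = 0 := le_antisymm hs00 hs0
    obtain ⟨n, hn⟩ := hsuc (d0 + 1)
    have h1 := hEb n
    rw [hseq] at hn
    have hcast : (2:ℝ) ^ ((1 - (0:ℝ)) * (n:ℝ)) = (2:ℝ) ^ n := by
      rw [sub_zero, one_mul, Real.rpow_natCast]
    rw [hcast] at hn
    have hq : (0:ℝ) < (2:ℝ) ^ n := by positivity
    nlinarith
  push_neg at hs00
  set δ : ℝ := (j:ℝ) * ((s':ℝ) - (s:ℝ)) - (s':ℝ) with hδdef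
  have hδpos : 0 < δ := by rw [hδdef]; linarith
  obtain ⟨T0, hT0⟩ := exists_nat_ge ((j:ℝ) / δ)
  have hT0' : (j:ℝ) ≤ (T0:ℝ) * δ := by
    rw [div_le_iff₀ hδpos] at hT0
    linarith
  set C1 := max C 1 with hC1def
  have hC1 : (0:ℝ) < C1 := lt_of_lt_of_le one_pos (le_max_right _ _)
  set Creq := max C1 ((2:ℝ) ^ (j * T0) * d0 + 1) with hCreqdef
  have hCreq1 : C1 ≤ Creq := le_max_left _ _
  have hCreqBig : (2:ℝ) ^ (j * T0) * d0 < Creq :=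
    lt_of_lt_of_le (lt_add_one _) (le_max_right _ _)
  have hCreqPos : (0:ℝ) < Creq := lt_of_lt_of_le hC1 hCreq1
  obtain ⟨n₀, hn₀⟩ := hsuc Creq
  have hub := hEb n₀
  have hn₀big : j * T0 ≤ n₀ := by
    by_contra hcon
    push_neg at hcon
    have h1 : (1:ℝ) ≤ (2:ℝ) ^ ((1 - (s:ℝ)) * n₀) := by
      have h0 : (2:ℝ) ^ (0:ℝ) ≤ (2:ℝ) ^ ((1 - (s:ℝ)) * n₀) := by
        apply Real.rpow_le_rpow_of_exponent_le one_le_two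
        have : (0:ℝ) ≤ (n₀:ℝ) := Nat.cast_nonneg _
        nlinarith
      simpa using h0
    have h2 : Creq ≤ (2:ℝ) ^ n₀ * d0 := by nlinarith
    have h3 : (2:ℝ) ^ n₀ ≤ (2:ℝ) ^ (j * T0) :=
      pow_le_pow_right₀ (by norm_num) (le_of_lt hcon)
    nlinarith
  set t := n₀ / j with htdef
  have htT0 : T0 ≤ t := by
    rw [htdef, Nat.le_div_iff_mul_le (by omega : 0 < j)]
    exact le_trans (le_of_eq (mul_comm T0 j)) hn₀big
  have hjt : j * t ≤ n₀ := by
    rw [htdef, mul_comm]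
    exact Nat.div_mul_le_self n₀ j
  have hn₀lt : n₀ < j * t + j := by
    have h1 := Nat.div_add_mod n₀ j
    rw [← htdef] at h1
    have h2 : n₀ % j < j := Nat.mod_lt _ (by omega)
    omega
  refine ⟨(j - 1) * t, ?_⟩
  have h1 : d (seg E n₀) ≤ 2 ^ (n₀ - j * t) * d (seg E (j * t)) := by
    have := d_seg_le_pow hd E (j * t) (n₀ - j * t)
    rwa [Nat.add_sub_cancel' hjt] at this
  have h2 := avgd_ge hj hd X Y t
  have p1 : (0:ℝ) < 2 ^ t := by positivity
  have p2 : (0:ℝ) < 2 ^ (n₀ - j * t) := by positivity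
  have h3 : Creq * (2:ℝ) ^ ((1 - (s:ℝ)) * n₀) / (2 ^ t * 2 ^ (n₀ - j * t)) ≤
      avgd j d (seg X ((j - 1) * t)) := by
    have c1 : Creq * (2:ℝ) ^ ((1 - (s:ℝ)) * n₀) / (2 ^ t * 2 ^ (n₀ - j * t)) ≤
        d (seg E n₀) / (2 ^ t * 2 ^ (n₀ - j * t)) :=
      (div_le_div_iff_of_pos_right (by positivity)).2 hn₀
    have c2 : d (seg E n₀) / (2 ^ t * 2 ^ (n₀ - j * t)) ≤
        (2 ^ (n₀ - j * t) * d (seg E (j * t))) / (2 ^ t * 2 ^ (n₀ - j * t)) :=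
      (div_le_div_iff_of_pos_right (by positivity)).2 h1
    have c3 : ((2:ℝ) ^ (n₀ - j * t) * d (seg E (j * t))) / (2 ^ t * 2 ^ (n₀ - j * t)) =
        d (seg E (j * t)) / 2 ^ t := by
      rw [mul_comm ((2:ℝ) ^ t) ((2:ℝ) ^ (n₀ - j * t))]
      exact mul_div_mul_left _ _ (ne_of_gt p2)
    calc Creq * (2:ℝ) ^ ((1 - (s:ℝ)) * n₀) / (2 ^ t * 2 ^ (n₀ - j * t))
        ≤ d (seg E n₀) / (2 ^ t * 2 ^ (n₀ - j * t)) := c1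
      _ ≤ (2 ^ (n₀ - j * t) * d (seg E (j * t))) / (2 ^ t * 2 ^ (n₀ - j * t)) := c2
      _ = d (seg E (j * t)) / 2 ^ t := c3
      _ ≤ _ := h2
  refine le_trans ?_ h3
  -- final exponent computation
  have hmcast : (((j - 1) * t : ℕ) : ℝ) = ((j:ℝ) - 1) * t := by
    push_cast [Nat.cast_sub (by omega : 1 ≤ j)]
    ring
  have hncast : ((n₀ - j * t : ℕ) : ℝ) = (n₀:ℝ) - (j:ℝ) * t := by
    push_cast [Nat.cast_sub hjt]
    ring
  have hn₀le : (n₀:ℝ) ≤ (j:ℝ) * t + j := by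
    have : (n₀:ℝ) < (j:ℝ) * t + j := by exact_mod_cast hn₀lt
    linarith
  have f1 : (s:ℝ) * n₀ ≤ (s:ℝ) * ((j:ℝ) * t + j) :=
    mul_le_mul_of_nonneg_left hn₀le hs0
  have f3 : (s:ℝ) * j ≤ (j:ℝ) := by
    nlinarith [Nat.cast_nonneg (α := ℝ) j]
  have f6 : (j:ℝ) ≤ (t:ℝ) * δ := by
    have : (T0:ℝ) * δ ≤ (t:ℝ) * δ :=
      mul_le_mul_of_nonneg_right (by exact_mod_cast htT0) (le_of_lt hδpos)
    linarith
  have hkey : (s:ℝ) * n₀ ≤ (s':ℝ) * (((j:ℝ) - 1) * t) := by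
    rw [hδdef] at f6
    nlinarith
  have hexp : (1 - (s':ℝ)) * (((j - 1) * t : ℕ) : ℝ) ≤
      (1 - (s:ℝ)) * n₀ - t - ((n₀:ℝ) - (j:ℝ) * t) := by
    rw [hmcast]
    nlinarith
  have hrw : (2:ℝ) ^ ((t:ℝ) + ((n₀:ℝ) - (j:ℝ) * t)) = (2:ℝ) ^ t * 2 ^ (n₀ - j * t) := by
    rw [Real.rpow_add two_pos, Real.rpow_natCast, ← hncast, Real.rpow_natCast]
  have hCle : C ≤ Creq := le_trans (le_max_left C 1) hCreq1
  rw [← hrw, div_eq_mul_inv, ← Real.rpow_neg (by norm_num : (0:ℝ) ≤ 2), mul_assoc,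
    ← Real.rpow_add two_pos]
  have hexp2 : (2:ℝ) ^ ((1 - (s':ℝ)) * (((j - 1) * t : ℕ) : ℝ)) ≤
      (2:ℝ) ^ ((1 - (s:ℝ)) * n₀ + -((t:ℝ) + ((n₀:ℝ) - (j:ℝ) * t))) := by
    apply Real.rpow_le_rpow_of_exponent_le (by norm_num)
    linarith
  calc C * (2:ℝ) ^ ((1 - (s':ℝ)) * (((j - 1) * t : ℕ) : ℝ))
      ≤ Creq * (2:ℝ) ^ ((1 - (s:ℝ)) * n₀ + -((t:ℝ) + ((n₀:ℝ) - (j:ℝ) * t))) := by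
        apply mul_le_mul hCle hexp2 (le_of_lt (Real.rpow_pos_of_pos two_pos _)) (le_of_lt hCreqPos)
    _ = _ := rfl

end Transfer

section Main

lemma main_lemma {B : Set Cantor} (hB : MaximalAntichainDeg B)
    {d : List Bool → ℝ} (hd : IsSupermartingale d) {s s' : ℚ}
    (hs0 : 0 ≤ s) (hs1 : (s:ℝ) ≤ 1) (hss' : s < s') (hs'1 : s' ≤ 1)
    (hsucc : ∀ X ∈ B, Succeeds d s X) :
    hausdorffDim {X : Cantor | MinimalDeg X} ≤ ENNReal.ofReal (s' : ℝ) := by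
  have hps : (0:ℝ) < (s':ℝ) - (s:ℝ) := by
    have : (s:ℝ) < (s':ℝ) := by exact_mod_cast hss'
    linarith
  obtain ⟨j0, hj0⟩ := exists_nat_gt ((s':ℝ) / ((s':ℝ) - (s:ℝ)))
  set j := max j0 2 with hjdef
  have hj2 : 2 ≤ j := le_max_right _ _
  have hjs : (s':ℝ) < (j:ℝ) * ((s':ℝ) - (s:ℝ)) := by
    have h1 : (j0:ℝ) ≤ (j:ℝ) := by exact_mod_cast le_max_left j0 2
    have h2 : (s':ℝ) / ((s':ℝ) - (s:ℝ)) < (j:ℝ) := lt_of_lt_of_le hj0 h1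
    rwa [div_lt_iff₀ hps] at h2
  set D := fun σ => d σ + avgd j d σ with hDdef
  have hDsm : IsSupermartingale D := super_add hd (avgd_super hj2 hd)
  obtain ⟨Z, hZ⟩ := lsc_graph D
  have hDsucc : ∀ X ∈ {X : Cantor | MinimalDeg X}, Succeeds D s' X := by
    intro X hX
    by_cases hXB : X ∈ B
    · refine succeeds_le (fun σ => le_add_of_nonneg_right (avgd_nonneg hd σ)) ?_
      exact succeeds_mono_rate hd (by exact_mod_cast le_of_lt hss') (hsucc X hXB)
    · obtain ⟨Y, hY, hXY⟩ := exists_above hB hX hXB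
      have hE : embd j X Y ∈ B := embd_mem hj2 hB.1 hY hXY
      have ht := succeeds_transfer hj2 hd (by exact_mod_cast hs0) hs1
        (by exact_mod_cast hss') hjs X Y (hsucc _ hE)
      exact succeeds_le (fun σ => le_add_of_nonneg_left (hd.1 σ)) ht
  have hmem : ENNReal.ofReal (s' : ℝ) ∈
      ({1} ∪ {x : ℝ≥0∞ | ∃ s : ℚ, 0 ≤ s ∧ s ≤ 1 ∧ x = ENNReal.ofReal (s : ℝ) ∧
        ∃ d, IsSupermartingale d ∧ LowerSemicomputableIn (oracleOf Z) d ∧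
          ∀ X ∈ {X : Cantor | MinimalDeg X}, Succeeds d s X} : Set ℝ≥0∞) := by
    refine Set.mem_union_right _ ⟨s', le_of_lt (lt_of_le_of_lt hs0 hss'), hs'1, rfl,
      D, hDsm, hZ, hDsucc⟩
  calc hausdorffDim {X : Cantor | MinimalDeg X}
      ≤ effDimIn (oracleOf Z) {X : Cantor | MinimalDeg X} := iInf_le _ Z
    _ ≤ ENNReal.ofReal (s' : ℝ) := sInf_le hmem

end Main

theorem stmt16' (r : ℝ≥0∞) (hr1 : r ≤ 1)
    (hmin : hausdorffDim {X : Cantor | MinimalDeg X} = r)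
    (B : Set Cantor) (hB : MaximalAntichainDeg B) :
    r ≤ hausdorffDim B := by
  subst hmin
  refine le_iInf fun Z => ?_
  refine le_sInf fun x hx => ?_
  rcases hx with hx | ⟨s, hs0, hs1, rfl, d, hdm, _hlsc, hsucc⟩
  · rw [Set.mem_singleton_iff] at hx
    subst hx
    exact hr1
  · rcases eq_or_lt_of_le hs1 with heq | hlt
    · rw [heq]
      rw [show ((1:ℚ):ℝ) = (1:ℝ) by norm_num, ENNReal.ofReal_one]
      exact hr1
    · apply ENNReal.le_of_forall_pos_le_add
      intro ε hε _
      have hεR : (0:ℝ) < (ε:ℝ) := hε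
      have hslt : (s:ℝ) < min 1 ((s:ℝ) + ε) := by
        rw [lt_min_iff]
        constructor
        · exact_mod_cast hlt
        · linarith
      obtain ⟨s', h1, h2⟩ := exists_rat_btwn hslt
      have hs'1 : s' ≤ 1 := by
        have : (s':ℝ) < 1 := lt_of_lt_of_le h2 (min_le_left _ _)
        exact_mod_cast le_of_lt this
      have hss' : s < s' := by exact_mod_cast h1
      have hsR1 : (s:ℝ) ≤ 1 := by exact_mod_cast hs1
      have hmain := main_lemma hB hdm hs0 hsR1 hss' hs'1 hsucc
      have h3 : (s':ℝ) ≤ (s:ℝ) + ε := le_of_lt (lt_of_lt_of_le h2 (min_le_right _ _))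
      calc hausdorffDim {X : Cantor | MinimalDeg X} ≤ ENNReal.ofReal (s' : ℝ) := hmain
        _ ≤ ENNReal.ofReal ((s:ℝ) + ε) := ENNReal.ofReal_le_ofReal h3
        _ ≤ ENNReal.ofReal (s:ℝ) + ENNReal.ofReal (ε:ℝ) := ENNReal.ofReal_add_le
        _ = ENNReal.ofReal (s:ℝ) + ε := by rw [ENNReal.ofReal_coe_nnreal]


/-- if the class of minimal-degree reals has Hausdorff dimension `r ≤ 1`, then
every maximal antichain of Turing degrees has Hausdorff dimension at least `r`. -/
theorem stmt16 (r : ℝ≥0∞) (hr1 : r ≤ 1)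
    (hmin : hausdorffDim {X : Cantor | MinimalDeg X} = r)
    (B : Set Cantor) (hB : MaximalAntichainDeg B) :
    r ≤ hausdorffDim B := stmt16' r hr1 hmin B hB
end
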